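/- arXiv:1312.5758 — 7 statements merged into one kernel-verified Lean document; each statement's English description precedes it below -/
import Mathlib

section
/- Two distinct triples i<j<k and i'<j'<k' of elements of [n] are inconsistent (i.e., there is no integer sequence x_1<x_2<...<x_n making both x_i,x_j,x_k and x_{i'},x_{j'},x_{k'} arithmetic progressions) if and only if either (i ≤ i', j ≥ j', k ≤ k') or (i ≥ i', j ≤ j', k ≥ k'). -/
/-- `t = (i,j,k)` is a triple with `1 ≤ i < j < k ≤ n`. -/
def IsTriple (n : ℕ) (t : ℕ × ℕ × ℕ) : Prop :=
  1 ≤ t.1 ∧ t.1 < t.2.1 ∧ t.2.1 < t.2.2 ∧ t.2.2 ≤ n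

/-- Two triples are consistent if some strictly increasing integer sequence
`x_1 < ⋯ < x_n` makes both of them arithmetic progressions. -/
def Consistent (n : ℕ) (t u : ℕ × ℕ × ℕ) : Prop :=
  ∃ x : ℕ → ℤ, (∀ i j, 1 ≤ i → i < j → j ≤ n → x i < x j) ∧
    x t.1 + x t.2.2 = 2 * x t.2.1 ∧ x u.1 + x u.2.2 = 2 * x u.2.1

lemma om (a b : ℤ) (ha : 1 ≤ a) (hb : 1 ≤ b) : 1 ≤ a * b := by nlinarith

lemma consistent_symm {n : ℕ} {t u : ℕ × ℕ × ℕ} (h : Consistent n t u) :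
    Consistent n u t := by
  obtain ⟨x, hm, e1, e2⟩ := h
  exact ⟨x, hm, e2, e1⟩

/-- piecewise-constant slope function with 5 regions -/
def D (b1 b2 b3 b4 b5 b6 : ℕ) (s1 s2 s3 s4 s5 : ℤ) (m : ℕ) : ℤ :=
  if b1 ≤ m ∧ m < b2 then s1
  else if b2 ≤ m ∧ m < b3 then s2
  else if b3 ≤ m ∧ m < b4 then s3
  else if b4 ≤ m ∧ m < b5 then s4
  else if b5 ≤ m ∧ m < b6 then s5
  else 1

variable {b1 b2 b3 b4 b5 b6 : ℕ} {s1 s2 s3 s4 s5 : ℤ}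

lemma D_eq1 {m : ℕ} (h1 : b1 ≤ m) (h2 : m < b2) :
    D b1 b2 b3 b4 b5 b6 s1 s2 s3 s4 s5 m = s1 := by
  unfold D; split_ifs <;> omega

lemma D_eq2 {m : ℕ} (h1 : b2 ≤ m) (h2 : m < b3) :
    D b1 b2 b3 b4 b5 b6 s1 s2 s3 s4 s5 m = s2 := by
  unfold D; split_ifs <;> omega

lemma D_eq3 {m : ℕ} (h1 : b3 ≤ m) (h2 : m < b4) (hb : b2 ≤ b3) :
    D b1 b2 b3 b4 b5 b6 s1 s2 s3 s4 s5 m = s3 := by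
  unfold D; split_ifs <;> omega

lemma D_eq4 {m : ℕ} (h1 : b4 ≤ m) (h2 : m < b5) (hb : b2 ≤ b3) (hb' : b3 ≤ b4) :
    D b1 b2 b3 b4 b5 b6 s1 s2 s3 s4 s5 m = s4 := by
  unfold D; split_ifs <;> omega

lemma D_eq5 {m : ℕ} (h1 : b5 ≤ m) (h2 : m < b6) (hb : b2 ≤ b3) (hb' : b3 ≤ b4)
    (hb'' : b4 ≤ b5) :
    D b1 b2 b3 b4 b5 b6 s1 s2 s3 s4 s5 m = s5 := by
  unfold D; split_ifs <;> omega

lemma D_ge (h1 : 1 ≤ s1) (h2 : 1 ≤ s2) (h3 : 1 ≤ s3) (h4 : 1 ≤ s4) (h5 : 1 ≤ s5) :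
    ∀ m, 1 ≤ D b1 b2 b3 b4 b5 b6 s1 s2 s3 s4 s5 m := by
  intro m; unfold D; split_ifs <;> omega

lemma sum_chunk {d : ℕ → ℤ} {p q : ℕ} {c : ℤ} (hpq : p ≤ q)
    (h : ∀ m, p ≤ m → m < q → d m = c) :
    ∑ m ∈ Finset.Ico p q, d m = ((q : ℤ) - (p : ℤ)) * c := by
  rw [Finset.sum_congr rfl (fun m hm => h m (Finset.mem_Ico.1 hm).1 (Finset.mem_Ico.1 hm).2),
    Finset.sum_const, Nat.card_Ico, nsmul_eq_mul]
  push_cast [hpq]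
  ring

lemma build (n i j k i' j' k' : ℕ) (hi : 1 ≤ i) (hij : i < j) (hjk : j < k)
    (hi' : 1 ≤ i') (hij' : i' < j') (hjk' : j' < k') (d : ℕ → ℤ) (hd : ∀ m, 1 ≤ d m)
    (e1 : ∑ m ∈ Finset.Ico i j, d m = ∑ m ∈ Finset.Ico j k, d m)
    (e2 : ∑ m ∈ Finset.Ico i' j', d m = ∑ m ∈ Finset.Ico j' k', d m) :
    Consistent n (i, j, k) (i', j', k') := by
  refine ⟨fun m => ∑ p ∈ Finset.Ico 1 m, d p, ?_, ?_, ?_⟩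
  · intro p q hp hpq _
    have h1 := Finset.sum_Ico_consecutive d hp (le_of_lt hpq)
    have h2 : 0 < ∑ m ∈ Finset.Ico p q, d m :=
      Finset.sum_pos (fun m _ => lt_of_lt_of_le zero_lt_one (hd m))
        ⟨p, Finset.mem_Ico.2 ⟨le_refl p, hpq⟩⟩
    dsimp only
    linarith
  · have A := Finset.sum_Ico_consecutive d hi (le_of_lt hij)
    have B := Finset.sum_Ico_consecutive d (le_trans hi (le_of_lt hij)) (le_of_lt hjk)
    dsimp only
    linarith
  · have A := Finset.sum_Ico_consecutive d hi' (le_of_lt hij')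
    have B := Finset.sum_Ico_consecutive d (le_trans hi' (le_of_lt hij')) (le_of_lt hjk')
    dsimp only
    linarith

lemma case2b (n i j k i' j' k' : ℕ) (h1 : 1 ≤ i) (h2 : i ≤ i') (h3 : i' < j)
    (h4 : j < j') (h5 : j' < k) (h6 : k < k') :
    Consistent n (i, j, k) (i', j', k') := by
  refine build n i j k i' j' k' (by omega) (by omega) (by omega) (by omega) (by omega) (by omega)
    (D i i' j j' k k'
      (((j' : ℤ) - j) * ((k' : ℤ) - k))
      (((k : ℤ) - j) * ((k' : ℤ) - k))
      (((j : ℤ) - i) * ((k' : ℤ) - k))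
      (((j : ℤ) - i') * ((k' : ℤ) - k))
      (((j' : ℤ) - j) * (((i' : ℤ) - i) + 2 * ((j : ℤ) - i')))) ?_ ?_ ?_
  · exact D_ge (om _ _ (by omega) (by omega)) (om _ _ (by omega) (by omega))
      (om _ _ (by omega) (by omega)) (om _ _ (by omega) (by omega))
      (om _ _ (by omega) (by omega))
  · rw [← Finset.sum_Ico_consecutive _ (show i ≤ i' by omega) (show i' ≤ j by omega),
      ← Finset.sum_Ico_consecutive _ (show j ≤ j' by omega) (show j' ≤ k by omega),
      sum_chunk (show i ≤ i' by omega) (fun m hm1 hm2 => D_eq1 hm1 hm2),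
      sum_chunk (show i' ≤ j by omega) (fun m hm1 hm2 => D_eq2 hm1 hm2),
      sum_chunk (show j ≤ j' by omega) (fun m hm1 hm2 => D_eq3 hm1 hm2 (by omega)),
      sum_chunk (show j' ≤ k by omega) (fun m hm1 hm2 => D_eq4 hm1 hm2 (by omega) (by omega))]
    ring
  · rw [← Finset.sum_Ico_consecutive _ (show i' ≤ j by omega) (show j ≤ j' by omega),
      ← Finset.sum_Ico_consecutive _ (show j' ≤ k by omega) (show k ≤ k' by omega),
      sum_chunk (show i' ≤ j by omega) (fun m hm1 hm2 => D_eq2 hm1 hm2),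
      sum_chunk (show j ≤ j' by omega) (fun m hm1 hm2 => D_eq3 hm1 hm2 (by omega)),
      sum_chunk (show j' ≤ k by omega) (fun m hm1 hm2 => D_eq4 hm1 hm2 (by omega) (by omega)),
      sum_chunk (show k ≤ k' by omega) (fun m hm1 hm2 => D_eq5 hm1 hm2 (by omega) (by omega) (by omega))]
    ring

lemma case1a (n i j k i' j' k' : ℕ) (h1 : 1 ≤ i') (h2 : i' < i) (h3 : i < j)
    (h4 : j < k) (h5 : k ≤ j') (h6 : j' < k') :
    Consistent n (i, j, k) (i', j', k') := by
  refine build n i j k i' j' k' (by omega) (by omega) (by omega) (by omega) (by omega) (by omega)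
    (D i' i j k j' k'
      ((k' : ℤ) - j')
      (((k : ℤ) - j) * ((k' : ℤ) - j'))
      (((j : ℤ) - i) * ((k' : ℤ) - j'))
      ((k' : ℤ) - j')
      (((i : ℤ) - i') + 2 * (((j : ℤ) - i) * ((k : ℤ) - j)) + ((j' : ℤ) - k))) ?_ ?_ ?_
  · exact D_ge (by omega) (om _ _ (by omega) (by omega)) (om _ _ (by omega) (by omega))
      (by omega)
      (by have hh := om ((j : ℤ) - i) ((k : ℤ) - j) (by omega) (by omega)
          have a1 : (1 : ℤ) ≤ (i : ℤ) - i' := by omega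
          have a2 : (0 : ℤ) ≤ (j' : ℤ) - k := by omega
          linarith)
  · rw [sum_chunk (show i ≤ j by omega) (fun m hm1 hm2 => D_eq2 hm1 hm2),
      sum_chunk (show j ≤ k by omega) (fun m hm1 hm2 => D_eq3 hm1 hm2 (by omega))]
    ring
  · rw [← Finset.sum_Ico_consecutive _ (show i' ≤ i by omega) (show i ≤ j' by omega),
      ← Finset.sum_Ico_consecutive _ (show i ≤ j by omega) (show j ≤ j' by omega),
      ← Finset.sum_Ico_consecutive _ (show j ≤ k by omega) (show k ≤ j' by omega),
      sum_chunk (show i' ≤ i by omega) (fun m hm1 hm2 => D_eq1 hm1 hm2),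
      sum_chunk (show i ≤ j by omega) (fun m hm1 hm2 => D_eq2 hm1 hm2),
      sum_chunk (show j ≤ k by omega) (fun m hm1 hm2 => D_eq3 hm1 hm2 (by omega)),
      sum_chunk (show k ≤ j' by omega) (fun m hm1 hm2 => D_eq4 hm1 hm2 (by omega) (by omega)),
      sum_chunk (show j' ≤ k' by omega)
        (fun m hm1 hm2 => D_eq5 hm1 hm2 (by omega) (by omega) (by omega))]
    ring

lemma case1b (n i j k i' j' k' : ℕ) (h1 : 1 ≤ i) (h2 : i ≤ i') (h3 : i' < j)
    (h4 : j < k) (h5 : k ≤ j') (h6 : j' < k') :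
    Consistent n (i, j, k) (i', j', k') := by
  refine build n i j k i' j' k' (by omega) (by omega) (by omega) (by omega) (by omega) (by omega)
    (D i j k j' k' k'
      (((k : ℤ) - j) * ((k' : ℤ) - j'))
      (((j : ℤ) - i) * ((k' : ℤ) - j'))
      ((k' : ℤ) - j')
      (((k : ℤ) - j) * (((j : ℤ) - i) + ((j : ℤ) - i')) + ((j' : ℤ) - k))
      1) ?_ ?_ ?_
  · exact D_ge (om _ _ (by omega) (by omega)) (om _ _ (by omega) (by omega)) (by omega)
      (by have hh := om ((k : ℤ) - j) (((j : ℤ) - i) + ((j : ℤ) - i')) (by omega) (by omega)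
          have a2 : (0 : ℤ) ≤ (j' : ℤ) - k := by omega
          linarith)
      (by omega)
  · rw [sum_chunk (show i ≤ j by omega) (fun m hm1 hm2 => D_eq1 hm1 hm2),
      sum_chunk (show j ≤ k by omega) (fun m hm1 hm2 => D_eq2 hm1 hm2)]
    ring
  · rw [← Finset.sum_Ico_consecutive _ (show i' ≤ j by omega) (show j ≤ j' by omega),
      ← Finset.sum_Ico_consecutive _ (show j ≤ k by omega) (show k ≤ j' by omega),
      sum_chunk (show i' ≤ j by omega) (fun m hm1 hm2 => D_eq1 (by omega) hm2),
      sum_chunk (show j ≤ k by omega) (fun m hm1 hm2 => D_eq2 hm1 hm2),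
      sum_chunk (show k ≤ j' by omega) (fun m hm1 hm2 => D_eq3 hm1 hm2 (by omega)),
      sum_chunk (show j' ≤ k' by omega) (fun m hm1 hm2 => D_eq4 hm1 hm2 (by omega) (by omega))]
    ring

lemma case1c (n i j k i' j' k' : ℕ) (h1 : 1 ≤ i) (h2 : i < j) (h3 : j ≤ i')
    (h4 : i' < k) (h5 : k ≤ j') (h6 : j' < k') :
    Consistent n (i, j, k) (i', j', k') := by
  refine build n i j k i' j' k' (by omega) (by omega) (by omega) (by omega) (by omega) (by omega)
    (D i j k j' k' k'
      (((k : ℤ) - j) * ((k' : ℤ) - j'))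
      (((j : ℤ) - i) * ((k' : ℤ) - j'))
      ((k' : ℤ) - j')
      (((j : ℤ) - i) * ((k : ℤ) - i') + ((j' : ℤ) - k))
      1) ?_ ?_ ?_
  · exact D_ge (om _ _ (by omega) (by omega)) (om _ _ (by omega) (by omega)) (by omega)
      (by have hh := om ((j : ℤ) - i) ((k : ℤ) - i') (by omega) (by omega)
          have a2 : (0 : ℤ) ≤ (j' : ℤ) - k := by omega
          linarith)
      (by omega)
  · rw [sum_chunk (show i ≤ j by omega) (fun m hm1 hm2 => D_eq1 hm1 hm2),
      sum_chunk (show j ≤ k by omega) (fun m hm1 hm2 => D_eq2 hm1 hm2)]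
    ring
  · rw [← Finset.sum_Ico_consecutive _ (show i' ≤ k by omega) (show k ≤ j' by omega),
      sum_chunk (show i' ≤ k by omega) (fun m hm1 hm2 => D_eq2 (by omega) hm2),
      sum_chunk (show k ≤ j' by omega) (fun m hm1 hm2 => D_eq3 hm1 hm2 (by omega)),
      sum_chunk (show j' ≤ k' by omega) (fun m hm1 hm2 => D_eq4 hm1 hm2 (by omega) (by omega))]
    ring

lemma case1d (n i j k i' j' k' : ℕ) (h1 : 1 ≤ i) (h2 : i < j) (h3 : j < k)
    (h4 : k ≤ i') (h5 : i' < j') (h6 : j' < k') :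
    Consistent n (i, j, k) (i', j', k') := by
  refine build n i j k i' j' k' (by omega) (by omega) (by omega) (by omega) (by omega) (by omega)
    (D i j k i' j' k'
      ((k : ℤ) - j)
      ((j : ℤ) - i)
      1
      ((k' : ℤ) - j')
      ((j' : ℤ) - i')) ?_ ?_ ?_
  · exact D_ge (by omega) (by omega) (by omega) (by omega) (by omega)
  · rw [sum_chunk (show i ≤ j by omega) (fun m hm1 hm2 => D_eq1 hm1 hm2),
      sum_chunk (show j ≤ k by omega) (fun m hm1 hm2 => D_eq2 hm1 hm2)]
    ring
  · rw [sum_chunk (show i' ≤ j' by omega) (fun m hm1 hm2 => D_eq4 hm1 hm2 (by omega) (by omega)),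
      sum_chunk (show j' ≤ k' by omega)
        (fun m hm1 hm2 => D_eq5 hm1 hm2 (by omega) (by omega) (by omega))]
    ring

lemma case2a (n i j k i' j' k' : ℕ) (h1 : 1 ≤ i') (h2 : i' < i) (h3 : i < j)
    (h4 : j ≤ j') (h5 : j' < k) (h6 : k < k') :
    Consistent n (i, j, k) (i', j', k') := by
  refine build n i j k i' j' k' (by omega) (by omega) (by omega) (by omega) (by omega) (by omega)
    (D i' i j k k' k'
      ((k' : ℤ) - k)
      (((k : ℤ) - j) * ((k' : ℤ) - k))
      (((j : ℤ) - i) * ((k' : ℤ) - k))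
      (((i : ℤ) - i') + 2 * (((j : ℤ) - i) * ((j' : ℤ) - j)))
      1) ?_ ?_ ?_
  · exact D_ge (by omega) (om _ _ (by omega) (by omega)) (om _ _ (by omega) (by omega))
      (by have hh := mul_nonneg (show (0 : ℤ) ≤ (j : ℤ) - i by omega)
            (show (0 : ℤ) ≤ (j' : ℤ) - j by omega)
          have a1 : (1 : ℤ) ≤ (i : ℤ) - i' := by omega
          linarith)
      (by omega)
  · rw [sum_chunk (show i ≤ j by omega) (fun m hm1 hm2 => D_eq2 hm1 hm2),
      sum_chunk (show j ≤ k by omega) (fun m hm1 hm2 => D_eq3 hm1 hm2 (by omega))]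
    ring
  · rw [← Finset.sum_Ico_consecutive _ (show i' ≤ i by omega) (show i ≤ j' by omega),
      ← Finset.sum_Ico_consecutive _ (show i ≤ j by omega) (show j ≤ j' by omega),
      ← Finset.sum_Ico_consecutive _ (show j' ≤ k by omega) (show k ≤ k' by omega),
      sum_chunk (show i' ≤ i by omega) (fun m hm1 hm2 => D_eq1 hm1 hm2),
      sum_chunk (show i ≤ j by omega) (fun m hm1 hm2 => D_eq2 hm1 hm2),
      sum_chunk (show j ≤ j' by omega) (fun m hm1 hm2 => D_eq3 hm1 (by omega) (by omega)),
      sum_chunk (show j' ≤ k by omega) (fun m hm1 hm2 => D_eq3 (by omega) hm2 (by omega)),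
      sum_chunk (show k ≤ k' by omega) (fun m hm1 hm2 => D_eq4 hm1 hm2 (by omega) (by omega))]
    ring

lemma case2c (n i j k i' j' k' : ℕ) (h1 : 1 ≤ i) (h2 : i < j) (h3 : j ≤ i')
    (h4 : i' < j') (h5 : j' < k) (h6 : k < k') :
    Consistent n (i, j, k) (i', j', k') := by
  refine build n i j k i' j' k' (by omega) (by omega) (by omega) (by omega) (by omega) (by omega)
    (D i j i' j' k' k'
      (((i' : ℤ) - j) + ((j' : ℤ) - i') * (2 * ((k : ℤ) - j') + ((k' : ℤ) - k)))
      ((j : ℤ) - i)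
      (((k' : ℤ) - j') * ((j : ℤ) - i))
      (((j' : ℤ) - i') * ((j : ℤ) - i))
      1) ?_ ?_ ?_
  · exact D_ge
      (by have hh := om ((j' : ℤ) - i') (2 * ((k : ℤ) - j') + ((k' : ℤ) - k)) (by omega) (by omega)
          have a1 : (0 : ℤ) ≤ (i' : ℤ) - j := by omega
          linarith)
      (by omega) (om _ _ (by omega) (by omega)) (om _ _ (by omega) (by omega)) (by omega)
  · rw [← Finset.sum_Ico_consecutive _ (show j ≤ i' by omega) (show i' ≤ k by omega),
      ← Finset.sum_Ico_consecutive _ (show i' ≤ j' by omega) (show j' ≤ k by omega),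
      sum_chunk (show i ≤ j by omega) (fun m hm1 hm2 => D_eq1 hm1 hm2),
      sum_chunk (show j ≤ i' by omega) (fun m hm1 hm2 => D_eq2 hm1 hm2),
      sum_chunk (show i' ≤ j' by omega) (fun m hm1 hm2 => D_eq3 hm1 hm2 (by omega)),
      sum_chunk (show j' ≤ k by omega) (fun m hm1 hm2 => D_eq4 hm1 (by omega) (by omega) (by omega))]
    ring
  · rw [sum_chunk (show i' ≤ j' by omega) (fun m hm1 hm2 => D_eq3 hm1 hm2 (by omega)),
      sum_chunk (show j' ≤ k' by omega) (fun m hm1 hm2 => D_eq4 hm1 hm2 (by omega) (by omega))]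
    ring

lemma con (n i j k i' j' k' : ℕ) (h1 : 1 ≤ i) (h2 : i < j) (h3 : j < k)
    (h1' : 1 ≤ i') (h2' : i' < j') (h3' : j' < k')
    (hG : j ≤ j' ∧ (k ≤ j' ∨ (j' < k ∧ k < k' ∧ (j < j' ∨ i' < i)))) :
    Consistent n (i, j, k) (i', j', k') := by
  obtain ⟨hjj, hG2⟩ := hG
  by_cases hc1 : k ≤ j'
  · rcases Nat.lt_or_ge i' i with ha | ha
    · exact case1a n i j k i' j' k' h1' ha h2 h3 hc1 h3'
    · rcases Nat.lt_or_ge i' j with hb | hb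
      · exact case1b n i j k i' j' k' h1 ha hb h3 hc1 h3'
      · rcases Nat.lt_or_ge i' k with hcc | hcc
        · exact case1c n i j k i' j' k' h1 h2 hb hcc hc1 h3'
        · exact case1d n i j k i' j' k' h1 h2 h3 hcc h2' h3'
  · have hd1 : j' < k := by omega
    have hd2 : k < k' := by omega
    rcases Nat.lt_or_ge i' i with ha | ha
    · exact case2a n i j k i' j' k' h1' ha h2 hjj hd1 hd2
    · rcases Nat.lt_or_ge i' j with hb | hb
      · have hjj' : j < j' := by omega
        exact case2b n i j k i' j' k' h1 ha hb hjj' hd1 hd2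
      · exact case2c n i j k i' j' k' h1 h2 hb h2' hd1 hd2

lemma rev_con {n i j k i' j' k' : ℕ} (h1 : 1 ≤ i) (h2 : i < j) (h3 : j < k) (h4 : k ≤ n)
    (h5 : 1 ≤ i') (h6 : i' < j') (h7 : j' < k') (h8 : k' ≤ n)
    (hc : Consistent n (n + 1 - k', n + 1 - j', n + 1 - i') (n + 1 - k, n + 1 - j, n + 1 - i)) :
    Consistent n (i, j, k) (i', j', k') := by
  obtain ⟨x, hm, e1, e2⟩ := hc
  refine ⟨fun m => -x (n + 1 - m), ?_, ?_, ?_⟩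
  · intro p q hp hpq hq
    have := hm (n + 1 - q) (n + 1 - p) (by omega) (by omega) (by omega)
    dsimp only
    linarith
  · dsimp only at e2 ⊢
    linarith
  · dsimp only at e1 ⊢
    linarith

lemma forward1 {n i j k i' j' k' : ℕ} (bt : 1 ≤ i ∧ i < j ∧ j < k ∧ k ≤ n)
    (bu : 1 ≤ i' ∧ i' < j' ∧ j' < k' ∧ k' ≤ n)
    (hii : i ≤ i') (hjj : j' ≤ j) (hkk : k ≤ k')
    (hne : ¬(i = i' ∧ j = j' ∧ k = k')) :
    ¬ Consistent n (i, j, k) (i', j', k') := by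
  obtain ⟨bt1, bt2, bt3, bt4⟩ := bt
  obtain ⟨bu1, bu2, bu3, bu4⟩ := bu
  rintro ⟨x, hm, e1, e2⟩
  dsimp only at e1 e2
  have le : ∀ p q, 1 ≤ p → p ≤ q → q ≤ n → x p ≤ x q := by
    intro p q a b c
    rcases Nat.eq_or_lt_of_le b with rfl | h
    · exact le_rfl
    · exact (hm p q a h c).le
  have b1 : x i ≤ x i' := le _ _ (by omega) hii (by omega)
  have b2 : x j' ≤ x j := le _ _ (by omega) hjj (by omega)
  have b3 : x k ≤ x k' := le _ _ (by omega) hkk (by omega)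
  have q1 : x i = x i' := by linarith
  have q2 : x j = x j' := by linarith
  have q3 : x k = x k' := by linarith
  have ei : i = i' := by
    by_contra h
    have hlt : i < i' := lt_of_le_of_ne hii h
    linarith [hm i i' (by omega) hlt (by omega)]
  have ej : j = j' := by
    by_contra h
    have hlt : j' < j := lt_of_le_of_ne hjj (Ne.symm h)
    linarith [hm j' j (by omega) hlt (by omega)]
  have ek : k = k' := by
    by_contra h
    have hlt : k < k' := lt_of_le_of_ne hkk h
    linarith [hm k k' (by omega) hlt (by omega)]
  exact hne ⟨ei, ej, ek⟩

theorem stmt0 (n : ℕ) (hn : 3 ≤ n) (t u : ℕ × ℕ × ℕ)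
    (ht : IsTriple n t) (hu : IsTriple n u) (hne : t ≠ u) :
    ¬ Consistent n t u ↔
      (t.1 ≤ u.1 ∧ u.2.1 ≤ t.2.1 ∧ t.2.2 ≤ u.2.2) ∨
      (u.1 ≤ t.1 ∧ t.2.1 ≤ u.2.1 ∧ u.2.2 ≤ t.2.2) := by
  obtain ⟨i, j, k⟩ := t
  obtain ⟨i', j', k'⟩ := u
  obtain ⟨ht1, ht2, ht3, ht4⟩ := ht
  obtain ⟨hu1, hu2, hu3, hu4⟩ := hu
  dsimp only at ht1 ht2 ht3 ht4 hu1 hu2 hu3 hu4 ⊢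
  have hne' : ¬(i = i' ∧ j = j' ∧ k = k') := by
    rintro ⟨rfl, rfl, rfl⟩
    exact hne rfl
  constructor
  · intro hnc
    by_contra hcond
    refine hnc ?_
    have hdis :
        (j ≤ j' ∧ (k ≤ j' ∨ (j' < k ∧ k < k' ∧ (j < j' ∨ i' < i)))) ∨
        (j' ≤ j ∧ (k' ≤ j ∨ (j < k' ∧ k' < k ∧ (j' < j ∨ i < i')))) ∨
        (n + 1 - j' ≤ n + 1 - j ∧ (n + 1 - i' ≤ n + 1 - j ∨
          (n + 1 - j < n + 1 - i' ∧ n + 1 - i' < n + 1 - i ∧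
            (n + 1 - j' < n + 1 - j ∨ n + 1 - k < n + 1 - k')))) ∨
        (n + 1 - j ≤ n + 1 - j' ∧ (n + 1 - i ≤ n + 1 - j' ∨
          (n + 1 - j' < n + 1 - i ∧ n + 1 - i < n + 1 - i' ∧
            (n + 1 - j < n + 1 - j' ∨ n + 1 - k' < n + 1 - k)))) := by
      omega
    rcases hdis with h | h | h | h
    · exact con n i j k i' j' k' ht1 ht2 ht3 hu1 hu2 hu3 h
    · exact consistent_symm (con n i' j' k' i j k hu1 hu2 hu3 ht1 ht2 ht3 h)
    · exact rev_con ht1 ht2 ht3 ht4 hu1 hu2 hu3 hu4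
        (con n (n + 1 - k') (n + 1 - j') (n + 1 - i') (n + 1 - k) (n + 1 - j) (n + 1 - i)
          (by omega) (by omega) (by omega) (by omega) (by omega) (by omega) h)
    · exact rev_con ht1 ht2 ht3 ht4 hu1 hu2 hu3 hu4
        (consistent_symm
          (con n (n + 1 - k) (n + 1 - j) (n + 1 - i) (n + 1 - k') (n + 1 - j') (n + 1 - i')
            (by omega) (by omega) (by omega) (by omega) (by omega) (by omega) h))
  · rintro (⟨a, b, c⟩ | ⟨a, b, c⟩)
    · exact forward1 ⟨ht1, ht2, ht3, ht4⟩ ⟨hu1, hu2, hu3, hu4⟩ a b c hne'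
    · intro hc
      exact forward1 ⟨hu1, hu2, hu3, hu4⟩ ⟨ht1, ht2, ht3, ht4⟩ a b c
        (fun ⟨x, y, z⟩ => hne' ⟨x.symm, y.symm, z.symm⟩) (consistent_symm hc)
end

section
/- Valid subsets of the set of 3-element subsets of [n] are in bijection with antichains of the poset P_n = {(i,j,k) ∈ [n]³ : i+j < n+1 < j+k} with componentwise order, via mapping a triple i<j<k to (i, n+1-j, k). -/
/-- Two (distinct) triples `i<j<k` and `i'<j'<k'` are consistent iff neither
`(i≤i', j≥j', k≤k')` nor `(i≥i', j≤j', k≥k')` holds. -/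
def ConsistentPair (t u : ℕ × ℕ × ℕ) : Prop :=
  ¬(t.1 ≤ u.1 ∧ u.2.1 ≤ t.2.1 ∧ t.2.2 ≤ u.2.2) ∧
  ¬(u.1 ≤ t.1 ∧ t.2.1 ≤ u.2.1 ∧ u.2.2 ≤ t.2.2)

/-- A collection of triples in `[n]` is valid if any two distinct members are consistent. -/
def ValidSet (n : ℕ) (S : Set (ℕ × ℕ × ℕ)) : Prop :=
  (∀ t ∈ S, IsTriple n t) ∧ S.Pairwise ConsistentPair

/-- The set `P_n = {(i,j,k) ∈ [n]³ : i + j < n + 1 < j + k}`. -/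
def PnSet (n : ℕ) : Set (ℕ × ℕ × ℕ) :=
  {p | (1 ≤ p.1 ∧ p.1 ≤ n) ∧ (1 ≤ p.2.1 ∧ p.2.1 ≤ n) ∧ (1 ≤ p.2.2 ∧ p.2.2 ≤ n) ∧
       p.1 + p.2.1 < n + 1 ∧ n + 1 < p.2.1 + p.2.2}

section aux

variable (n : ℕ)

private def phiMap : ℕ × ℕ × ℕ → ℕ × ℕ × ℕ := fun t => (t.1, n + 1 - t.2.1, t.2.2)

private lemma phi_invol_triple {t : ℕ × ℕ × ℕ} (ht : IsTriple n t) :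
    phiMap n (phiMap n t) = t := by
  obtain ⟨i, j, k⟩ := t
  obtain ⟨h1, h2, h3, h4⟩ := ht
  simp [phiMap, Prod.mk.injEq] at *
  omega

private lemma phi_invol_pn {p : ℕ × ℕ × ℕ} (hp : p ∈ PnSet n) :
    phiMap n (phiMap n p) = p := by
  obtain ⟨i, j, k⟩ := p
  obtain ⟨h1, h2, h3, h4, h5⟩ := hp
  simp [phiMap, Prod.mk.injEq] at *
  omega

private lemma phi_mem_pn {t : ℕ × ℕ × ℕ} (ht : IsTriple n t) :
    phiMap n t ∈ PnSet n := by
  obtain ⟨i, j, k⟩ := t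
  obtain ⟨h1, h2, h3, h4⟩ := ht
  simp [phiMap, PnSet, Set.mem_setOf_eq] at *
  omega

private lemma phi_triple_of_pn {p : ℕ × ℕ × ℕ} (hp : p ∈ PnSet n) :
    IsTriple n (phiMap n p) := by
  obtain ⟨i, j, k⟩ := p
  obtain ⟨h1, h2, h3, h4, h5⟩ := hp
  simp [phiMap, IsTriple] at *
  omega

private lemma phi_le_iff {t u : ℕ × ℕ × ℕ} (ht : t.2.1 ≤ n + 1) (hu : u.2.1 ≤ n + 1) :
    phiMap n t ≤ phiMap n u ↔ (t.1 ≤ u.1 ∧ u.2.1 ≤ t.2.1 ∧ t.2.2 ≤ u.2.2) := by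
  obtain ⟨i, j, k⟩ := t
  obtain ⟨i', j', k'⟩ := u
  simp [phiMap, Prod.mk_le_mk] at *
  omega

private lemma valid_image {S : Set (ℕ × ℕ × ℕ)} (hS : ValidSet n S) :
    phiMap n '' S ⊆ PnSet n ∧ IsAntichain (· ≤ ·) (phiMap n '' S) := by
  obtain ⟨hS1, hS2⟩ := hS
  constructor
  · rintro p ⟨t, htS, rfl⟩
    exact phi_mem_pn n (hS1 t htS)
  · rintro p ⟨t, htS, rfl⟩ q ⟨u, huS, rfl⟩ hne hle
    have htu : t ≠ u := fun h => hne (by rw [h])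
    have hc := hS2 htS huS htu
    have h1 := (hS1 t htS).2.2.1.le.trans (hS1 t htS).2.2.2
    have h2 := (hS1 u huS).2.2.1.le.trans (hS1 u huS).2.2.2
    exact hc.1 ((phi_le_iff n (by omega) (by omega)).mp hle)

private lemma valid_preimage {A : Set (ℕ × ℕ × ℕ)} (hsub : A ⊆ PnSet n)
    (hanti : IsAntichain (· ≤ ·) A) : ValidSet n (phiMap n '' A) := by
  constructor
  · rintro t ⟨p, hpA, rfl⟩
    exact phi_triple_of_pn n (hsub hpA)
  · rintro t ⟨p, hpA, rfl⟩ u ⟨q, hqA, rfl⟩ hne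
    have hpq : p ≠ q := by
      rintro rfl; exact hne rfl
    have h1 := (hsub hpA).2.1.2
    have h2 := (hsub hqA).2.1.2
    constructor
    · intro h
      exact hanti hpA hqA hpq <| by
        have : phiMap n (phiMap n p) ≤ phiMap n (phiMap n q) := by
          rw [phi_le_iff n (by simp [phiMap]) (by simp [phiMap])]
          exact h
        rwa [phi_invol_pn n (hsub hpA), phi_invol_pn n (hsub hqA)] at this
    · intro h
      exact hanti hqA hpA (Ne.symm hpq) <| by
        have : phiMap n (phiMap n q) ≤ phiMap n (phiMap n p) := by
          rw [phi_le_iff n (by simp [phiMap]) (by simp [phiMap])]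
          exact h
        rwa [phi_invol_pn n (hsub hqA), phi_invol_pn n (hsub hpA)] at this

private lemma image_image_valid {S : Set (ℕ × ℕ × ℕ)} (hS : ValidSet n S) :
    phiMap n '' (phiMap n '' S) = S := by
  rw [Set.image_image]
  conv_rhs => rw [← Set.image_id S]
  exact Set.image_congr (fun t ht => phi_invol_triple n (hS.1 t ht))

private lemma image_image_pn {A : Set (ℕ × ℕ × ℕ)} (hsub : A ⊆ PnSet n) :
    phiMap n '' (phiMap n '' A) = A := by
  rw [Set.image_image]
  conv_rhs => rw [← Set.image_id A]
  exact Set.image_congr (fun p hp => phi_invol_pn n (hsub hp))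

end aux

/-- Valid collections of triples are in bijection with antichains of `P_n`
(with the componentwise order), via `(i,j,k) ↦ (i, n+1-j, k)`. -/
theorem stmt2 (n : ℕ) :
    Set.BijOn (fun S : Set (ℕ × ℕ × ℕ) =>
        (fun t : ℕ × ℕ × ℕ => (t.1, n + 1 - t.2.1, t.2.2)) '' S)
      {S | ValidSet n S}
      {A | A ⊆ PnSet n ∧ IsAntichain (· ≤ ·) A} := by
  have hfun : (fun t : ℕ × ℕ × ℕ => (t.1, n + 1 - t.2.1, t.2.2)) = phiMap n := rfl
  rw [hfun]
  refine ⟨fun S hS => valid_image n hS, ?_, ?_⟩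
  · intro S hS S' hS' heq
    have heq' : phiMap n '' S = phiMap n '' S' := heq
    calc S = phiMap n '' (phiMap n '' S) := (image_image_valid n hS).symm
    _ = phiMap n '' (phiMap n '' S') := by rw [heq']
    _ = S' := image_image_valid n hS'
  · rintro A ⟨hsub, hanti⟩
    exact ⟨phiMap n '' A, valid_preimage n hsub hanti, image_image_pn n hsub⟩
end

section
/- For n ≥ 2 and a triple (a,b,k) of positive integers with 1 ≤ k ≤ b ≤ n-1-a, the tableau Add(T⁰_{n-1}; a, b, k) is a join-irreducible element of M_n, and every join-irreducible of M_n arises uniquely in this way. -/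
/-- The cells of the Young diagram with row lengths `lam`: `(a,b)` with
`a,b ≥ 1` and `b ≤ lam a` (rows and columns are 1-indexed). -/
def CellOf (lam : ℕ → ℕ) (a b : ℕ) : Prop := 1 ≤ a ∧ 1 ≤ b ∧ b ≤ lam a

instance (lam : ℕ → ℕ) (a b : ℕ) : Decidable (CellOf lam a b) :=
  inferInstanceAs (Decidable (1 ≤ a ∧ 1 ≤ b ∧ b ≤ lam a))

/-- Extension of a tableau by the boundary conventions `T_{a,0} = a`, `T_{0,b} = 0`. -/
def ExtT (T : ℕ → ℕ → ℕ) (a b : ℕ) : ℕ :=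
  if b = 0 then a else if a = 0 then 0 else T a b

/-- `T` is a semistandard Young tableau of shape `lam` (1-indexed, with positive
entries, equal to `0` outside the shape): rows are weakly increasing and columns
strictly increasing, expressed with the conventions `T_{a,0} = a`, `T_{0,b} = 0`. -/
def IsSSYTShape (lam : ℕ → ℕ) (T : ℕ → ℕ → ℕ) : Prop :=
  (∀ a b, ¬ CellOf lam a b → T a b = 0) ∧
  (∀ a b, CellOf lam a b → ExtT T a (b - 1) ≤ ExtT T a b) ∧
  (∀ a b, CellOf lam a b → ExtT T (a - 1) b < ExtT T a b)

/-- Row lengths of the staircase shape `δ_{n-1} = (n-2, n-3, …, 1)`: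
row `a` has `n-1-a` cells. -/
def staircase (n : ℕ) : ℕ → ℕ := fun a => n - 1 - a

/-- Membership in `M_n`: SSYT of shape `δ_{n-1}` with all entries at most `n-1`. -/
def MnMem (n : ℕ) (T : ℕ → ℕ → ℕ) : Prop :=
  IsSSYTShape (staircase n) T ∧ ∀ a b, T a b ≤ n - 1

/-- The entry of `T` at `(a,b)` is reducible: `T_{a,b} - T_{a,b-1} ≥ 1` and
`T_{a,b} - T_{a-1,b} ≥ 2`, with the conventions `T_{a,0} = a`, `T_{0,b} = 0`. -/
def Reducible (T : ℕ → ℕ → ℕ) (a b : ℕ) : Prop :=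
  ExtT T a (b - 1) + 1 ≤ ExtT T a b ∧ ExtT T (a - 1) b + 2 ≤ ExtT T a b

/-- The minimal SSYT of shape `lam`, whose `(a,b)`-entry is `a`. -/
def minT (lam : ℕ → ℕ) : ℕ → ℕ → ℕ := fun a b => if CellOf lam a b then a else 0

/-- `AddT lam T a b k` adds `k` to every entry of `T` in a cell `(x,y)` of `lam`
with `x ≥ a` and `y ≥ b`. -/
def AddT (lam : ℕ → ℕ) (T : ℕ → ℕ → ℕ) (a b k : ℕ) : ℕ → ℕ → ℕ :=
  fun x y => if CellOf lam x y ∧ a ≤ x ∧ b ≤ y then T x y + k else T x y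

/-- `S` is covered by `T` in `M_n` (entrywise order). -/
def MnCovBy (n : ℕ) (S T : ℕ → ℕ → ℕ) : Prop :=
  MnMem n S ∧ S < T ∧ ∀ U, MnMem n U → ¬(S < U ∧ U < T)

/-- `T` is a join-irreducible of `M_n`: a (non-minimal) element of `M_n`
covering exactly one element. -/
def MnJoinIrred (n : ℕ) (T : ℕ → ℕ → ℕ) : Prop :=
  MnMem n T ∧ ∃! S, MnCovBy n S T

/- ============ auxiliary ============ -/

/-- Decrement of `T` at cell `(a,b)`. -/
def DecT (T : ℕ → ℕ → ℕ) (a b : ℕ) : ℕ → ℕ → ℕ :=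
  fun x y => if x = a ∧ y = b then T x y - 1 else T x y

lemma J_apply (n a b k x y : ℕ) :
    AddT (staircase n) (minT (staircase n)) a b k x y
      = if CellOf (staircase n) x y then x + (if a ≤ x ∧ b ≤ y then k else 0) else 0 := by
  unfold AddT minT
  by_cases h : CellOf (staircase n) x y <;> by_cases h2 : a ≤ x ∧ b ≤ y <;>
    simp [h, h2]

lemma mem_J (n a b k : ℕ) (hn : 2 ≤ n) (ha : 1 ≤ a) (hk : 1 ≤ k) (hkb : k ≤ b)
    (hab : a + b ≤ n - 1) :
    MnMem n (AddT (staircase n) (minT (staircase n)) a b k) := by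
  refine ⟨⟨?_, ?_, ?_⟩, ?_⟩
  · intro x y hc
    rw [J_apply]; simp [hc]
  · intro x y hc
    simp only [ExtT, J_apply] at *
    split_ifs at * <;> simp only [CellOf, staircase] at * <;> omega
  · intro x y hc
    simp only [ExtT, J_apply] at *
    split_ifs at * <;> simp only [CellOf, staircase] at * <;> omega
  · intro x y
    rw [J_apply]
    split_ifs <;> simp only [CellOf, staircase] at * <;> omega

lemma red_J (n a b k : ℕ) (hn : 2 ≤ n) (ha : 1 ≤ a) (hk : 1 ≤ k) (hkb : k ≤ b)
    (hab : a + b ≤ n - 1) (x y : ℕ) :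
    Reducible (AddT (staircase n) (minT (staircase n)) a b k) x y ↔ x = a ∧ y = b := by
  simp only [Reducible, ExtT, J_apply]
  split_ifs <;> (try simp only [CellOf, staircase] at *) <;> omega

lemma le_entry {n : ℕ} {T : ℕ → ℕ → ℕ} (hT : MnMem n T) :
    ∀ x y, CellOf (staircase n) x y → x ≤ T x y := by
  intro x
  induction x with
  | zero => intro y hc; exact absurd hc.1 (by omega)
  | succ x ih =>
    intro y hc
    have h3 := hT.1.2.2 (x + 1) y hc
    have hy : 1 ≤ y := hc.2.1
    rcases Nat.eq_zero_or_pos x with hx | hx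
    · subst hx
      simp only [ExtT, Nat.add_sub_cancel] at h3
      split_ifs at h3 <;> omega
    · have hc' : CellOf (staircase n) x y := by
        obtain ⟨-, h2, h3'⟩ := hc
        refine ⟨hx, h2, ?_⟩
        simp only [staircase] at *; omega
      have := ih y hc'
      simp only [ExtT, Nat.add_sub_cancel] at h3
      split_ifs at h3 <;> omega

lemma red_cell {n : ℕ} {T : ℕ → ℕ → ℕ} (hT : MnMem n T) {x y : ℕ}
    (hr : Reducible T x y) : CellOf (staircase n) x y := by
  by_contra hc
  have h0 : T x y = 0 := hT.1.1 x y hc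
  obtain ⟨h1, h2⟩ := hr
  simp only [ExtT] at h1 h2
  split_ifs at h1 h2 <;> omega

lemma extDec (T : ℕ → ℕ → ℕ) (a b x y : ℕ) (ha : 1 ≤ a) (hb : 1 ≤ b) :
    ExtT (DecT T a b) x y
      = if x = a ∧ y = b then ExtT T x y - 1 else ExtT T x y := by
  unfold ExtT DecT
  split_ifs <;> omega

lemma dec_mem {n : ℕ} {T : ℕ → ℕ → ℕ} (hT : MnMem n T) {a b : ℕ}
    (hr : Reducible T a b) : MnMem n (DecT T a b) := by
  have hc := red_cell hT hr
  have ha1 : 1 ≤ a := hc.1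
  have hb1 : 1 ≤ b := hc.2.1
  obtain ⟨h1, h2⟩ := hr
  refine ⟨⟨?_, ?_, ?_⟩, ?_⟩
  · intro x y hxy
    have := hT.1.1 x y hxy
    unfold DecT
    split_ifs with h
    · obtain ⟨rfl, rfl⟩ := h; exact absurd hc hxy
    · exact this
  · intro x y hxy
    have hrow := hT.1.2.1 x y hxy
    rw [extDec T a b _ _ ha1 hb1, extDec T a b _ _ ha1 hb1]
    by_cases hab : x = a ∧ y = b
    · obtain ⟨rfl, rfl⟩ := hab
      split_ifs <;> omega
    · rw [if_neg hab]
      split_ifs with h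
      · obtain ⟨rfl, h'⟩ := h
        omega
      · exact hrow
  · intro x y hxy
    have hcol := hT.1.2.2 x y hxy
    rw [extDec T a b _ _ ha1 hb1, extDec T a b _ _ ha1 hb1]
    by_cases hab : x = a ∧ y = b
    · obtain ⟨rfl, rfl⟩ := hab
      split_ifs <;> omega
    · rw [if_neg hab]
      split_ifs with h
      · omega
      · exact hcol
  · intro x y
    have := hT.2 x y
    unfold DecT
    split_ifs <;> omega

lemma dec_lt {n : ℕ} {T : ℕ → ℕ → ℕ} (hT : MnMem n T) {a b : ℕ}
    (hr : Reducible T a b) : DecT T a b < T := by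
  have hc := red_cell hT hr
  have hpos : 1 ≤ T a b := by
    obtain ⟨h1, h2⟩ := hr
    simp only [ExtT] at h2
    split_ifs at h2 <;> omega
  have hdab : DecT T a b a b = T a b - 1 := by simp [DecT]
  have hle : ∀ x y, DecT T a b x y ≤ T x y := by
    intro x y; unfold DecT; split_ifs <;> omega
  rw [Pi.lt_def]
  refine ⟨fun x => by rw [Pi.le_def]; intro y; exact hle x y, a, ?_⟩
  rw [Pi.lt_def]
  exact ⟨fun y => hle a y, b, by rw [hdab]; omega⟩

lemma dec_cov {n : ℕ} {T : ℕ → ℕ → ℕ} (hT : MnMem n T) {a b : ℕ}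
    (hr : Reducible T a b) : MnCovBy n (DecT T a b) T := by
  have hc := red_cell hT hr
  have hpos : 1 ≤ T a b := by
    obtain ⟨h1, h2⟩ := hr
    simp only [ExtT] at h2
    split_ifs at h2 <;> omega
  refine ⟨dec_mem hT hr, dec_lt hT hr, ?_⟩
  rintro U _ ⟨hDU, hUT⟩
  have hDU' : ∀ x y, DecT T a b x y ≤ U x y := fun x y => hDU.1 x y
  have hUT' : ∀ x y, U x y ≤ T x y := fun x y => hUT.1 x y
  have hoff : ∀ x y, ¬(x = a ∧ y = b) → U x y = T x y := by
    intro x y h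
    have h1 := hDU' x y
    have h2 := hUT' x y
    unfold DecT at h1
    rw [if_neg h] at h1
    omega
  by_cases hab : U a b = T a b
  · have : U = T := by
      funext x y
      by_cases h : x = a ∧ y = b
      · obtain ⟨rfl, rfl⟩ := h; exact hab
      · exact hoff x y h
    rw [this] at hUT
    exact lt_irrefl _ hUT
  · have : U = DecT T a b := by
      funext x y
      by_cases h : x = a ∧ y = b
      · obtain ⟨rfl, rfl⟩ := h
        have h1 := hDU' x y
        have h2 := hUT' x y
        unfold DecT at h1 ⊢
        rw [if_pos ⟨rfl, rfl⟩] at h1 ⊢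
        omega
      · rw [hoff x y h]
        unfold DecT
        rw [if_neg h]
    rw [this] at hDU
    exact lt_irrefl _ hDU

lemma extT_zero_right (T : ℕ → ℕ → ℕ) (x : ℕ) : ExtT T x 0 = x := rfl

lemma extT_zero_left (T : ℕ → ℕ → ℕ) (y : ℕ) (hy : 1 ≤ y) : ExtT T 0 y = 0 := by
  unfold ExtT
  split_ifs <;> omega

lemma extT_pos (T : ℕ → ℕ → ℕ) (x y : ℕ) (hx : 1 ≤ x) (hy : 1 ≤ y) :
    ExtT T x y = T x y := by
  unfold ExtT
  split_ifs <;> omega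

lemma exists_red {n : ℕ} {S T : ℕ → ℕ → ℕ} (hS : MnMem n S) (hT : MnMem n T)
    (hST : S < T) : ∃ a b, Reducible T a b ∧ S a b < T a b := by
  classical
  rw [Pi.lt_def] at hST
  obtain ⟨hle, x0, hx0⟩ := hST
  rw [Pi.lt_def] at hx0
  obtain ⟨-, y0, hy0⟩ := hx0
  have hle' : ∀ x y, S x y ≤ T x y := fun x y => hle x y
  have hPex : ∃ y, ∃ x, S x y < T x y := ⟨y0, x0, hy0⟩
  obtain ⟨b, a, hab, hbmin, hamin⟩ :
      ∃ b a, S a b < T a b ∧ (∀ y, y < b → ∀ x, ¬ S x y < T x y) ∧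
        (∀ x, x < a → ¬ S x b < T x b) := by
    have hQ := Nat.find_spec hPex
    refine ⟨Nat.find hPex, Nat.find hQ, Nat.find_spec hQ, ?_, ?_⟩
    · intro y hy x h
      exact Nat.find_min hPex hy ⟨x, h⟩
    · intro x hx
      exact Nat.find_min hQ hx
  have hcell : CellOf (staircase n) a b := by
    by_contra hc
    have := hT.1.1 a b hc
    omega
  have ha1 : 1 ≤ a := hcell.1
  have hb1 : 1 ≤ b := hcell.2.1
  have hSab : a ≤ S a b := le_entry hS a b hcell
  refine ⟨a, b, ⟨?_, ?_⟩, hab⟩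
  · -- row condition
    rcases Nat.lt_or_ge b 2 with hb2 | hb2
    · have : b = 1 := by omega
      subst this
      have e0 : (1 : ℕ) - 1 = 0 := rfl
      rw [e0, extT_zero_right, extT_pos T a 1 ha1 le_rfl]
      omega
    · have hcell' : CellOf (staircase n) a (b - 1) := by
        simp only [CellOf, staircase] at *
        omega
      have e1 : T a (b - 1) = S a (b - 1) := by
        have h1 := hbmin (b - 1) (by omega) a
        have h2 := hle' a (b - 1)
        omega
      have hSrow := hS.1.2.1 a b hcell
      simp only [ExtT] at hSrow ⊢
      split_ifs at hSrow ⊢ <;> omega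
  · -- column condition
    rcases Nat.lt_or_ge a 2 with ha2 | ha2
    · have : a = 1 := by omega
      subst this
      have e0 : (1 : ℕ) - 1 = 0 := rfl
      rw [e0, extT_zero_left T b hb1, extT_pos T 1 b le_rfl hb1]
      omega
    · have hcell' : CellOf (staircase n) (a - 1) b := by
        simp only [CellOf, staircase] at *
        omega
      have e1 : T (a - 1) b = S (a - 1) b := by
        have h1 := hamin (a - 1) (by omega)
        have h2 := hle' (a - 1) b
        omega
      have hScol := hS.1.2.2 a b hcell
      simp only [ExtT] at hScol ⊢
      split_ifs at hScol ⊢ <;> omega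

lemma cov_eq_dec {n : ℕ} {T S : ℕ → ℕ → ℕ} (hT : MnMem n T)
    (hcov : MnCovBy n S T) : ∃ a b, Reducible T a b ∧ S = DecT T a b := by
  obtain ⟨hS, hST, hmin⟩ := hcov
  obtain ⟨a, b, hr, hlt⟩ := exists_red hS hT hST
  refine ⟨a, b, hr, ?_⟩
  have hdm := dec_mem hT hr
  have hdlt := dec_lt hT hr
  have hSD : S ≤ DecT T a b := by
    rw [Pi.le_def]
    intro x
    rw [Pi.le_def]
    intro y
    unfold DecT
    split_ifs with h
    · obtain ⟨rfl, rfl⟩ := h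
      omega
    · exact hST.1 x y
  by_cases he : S = DecT T a b
  · exact he
  · exact absurd ⟨lt_of_le_of_ne hSD he, hdlt⟩ (hmin _ hdm)

lemma structure_lemma {n : ℕ} {T : ℕ → ℕ → ℕ} {a b : ℕ} (hn : 2 ≤ n)
    (hT : MnMem n T) (hr : Reducible T a b)
    (huniq : ∀ x y, Reducible T x y → x = a ∧ y = b) :
    ∃ k, 1 ≤ k ∧ k ≤ b ∧ T a b = a + k ∧
      T = AddT (staircase n) (minT (staircase n)) a b k := by
  have hc := red_cell hT hr
  have ha1 : 1 ≤ a := hc.1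
  have hb1 : 1 ≤ b := hc.2.1
  have hsh : b ≤ n - 1 - a := hc.2.2
  -- T a b ≥ a + 1
  have hTab : a + 1 ≤ T a b := by
    have h2 := hr.2
    rw [extT_pos T a b ha1 hb1] at h2
    rcases Nat.lt_or_ge a 2 with h | h
    · have : a = 1 := by omega
      subst this
      omega
    · have hc' : CellOf (staircase n) (a - 1) b := by
        simp only [CellOf, staircase] at *
        omega
      have := le_entry hT (a - 1) b hc'
      rw [extT_pos T (a - 1) b (by omega) hb1] at h2
      omega
  set k := T a b - a with hkdef
  have hk1 : 1 ≤ k := by omega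
  have main : ∀ m x y, x + y ≤ m → CellOf (staircase n) x y →
      T x y = x + (if a ≤ x ∧ b ≤ y then k else 0) := by
    intro m
    induction m with
    | zero => intro x y h hcxy; exact absurd hcxy.1 (by omega)
    | succ m ih =>
      intro x y hxy hcxy
      have hx1 : 1 ≤ x := hcxy.1
      have hy1 : 1 ≤ y := hcxy.2.1
      by_cases hab2 : x = a ∧ y = b
      · obtain ⟨rfl, rfl⟩ := hab2
        rw [if_pos ⟨le_rfl, le_rfl⟩]
        omega
      · have hnr : ¬ Reducible T x y := fun h => hab2 (huniq x y h)
        have hrow := hT.1.2.1 x y hcxy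
        have hcol := hT.1.2.2 x y hcxy
        have hE1 : ExtT T x (y - 1) = x + (if a ≤ x ∧ b ≤ y - 1 then k else 0) := by
          rcases Nat.lt_or_ge y 2 with h2 | h2
          · have : y = 1 := by omega
            subst this
            have e0 : (1 : ℕ) - 1 = 0 := rfl
            rw [e0, extT_zero_right, if_neg (by omega)]
            omega
          · have hc' : CellOf (staircase n) x (y - 1) := by
              simp only [CellOf, staircase] at *
              omega
            rw [extT_pos T x (y - 1) hx1 (by omega), ih x (y - 1) (by omega) hc']
        have hE2 : ExtT T (x - 1) y = (x - 1) + (if a ≤ x - 1 ∧ b ≤ y then k else 0) := by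
          rcases Nat.lt_or_ge x 2 with h2 | h2
          · have : x = 1 := by omega
            subst this
            have e0 : (1 : ℕ) - 1 = 0 := rfl
            rw [e0, extT_zero_left T y hy1, if_neg (by omega)]
          · have hc' : CellOf (staircase n) (x - 1) y := by
              simp only [CellOf, staircase] at *
              omega
            rw [extT_pos T (x - 1) y (by omega) hy1, ih (x - 1) y (by omega) hc']
        have hxy' : ExtT T x y = T x y := extT_pos T x y hx1 hy1
        rw [hE1, hxy'] at hrow
        rw [hE2, hxy'] at hcol
        unfold Reducible at hnr
        rw [hE1, hE2, hxy'] at hnr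
        split_ifs at hrow hcol hnr ⊢ <;> omega
  have hkb : k ≤ b := by
    have hcell2 : CellOf (staircase n) (n - 1 - b) b := by
      simp only [CellOf, staircase] at *
      omega
    have h1 := main (n - 1 - b + b) (n - 1 - b) b le_rfl hcell2
    rw [if_pos ⟨by omega, le_rfl⟩] at h1
    have h2 := hT.2 (n - 1 - b) b
    omega
  refine ⟨k, hk1, hkb, by omega, ?_⟩
  funext x y
  rw [J_apply]
  by_cases hc2 : CellOf (staircase n) x y
  · rw [if_pos hc2]
    exact main (x + y) x y le_rfl hc2
  · rw [if_neg hc2]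
    exact hT.1.1 x y hc2


/-- For `n ≥ 2` and `(a,b,k)` with `1 ≤ k ≤ b ≤ n-1-a`, the tableau
`Add(T⁰_{n-1}; a, b, k)` is a join-irreducible of `M_n`, and every
join-irreducible of `M_n` arises uniquely in this way. -/
theorem stmt4 (n : ℕ) (hn : 2 ≤ n) :
    (∀ a b k : ℕ, 1 ≤ a → 1 ≤ k → k ≤ b → a + b ≤ n - 1 →
      MnJoinIrred n (AddT (staircase n) (minT (staircase n)) a b k)) ∧
    (∀ T : ℕ → ℕ → ℕ, MnJoinIrred n T →
      ∃! x : ℕ × ℕ × ℕ,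
        (1 ≤ x.1 ∧ 1 ≤ x.2.2 ∧ x.2.2 ≤ x.2.1 ∧ x.1 + x.2.1 ≤ n - 1) ∧
        T = AddT (staircase n) (minT (staircase n)) x.1 x.2.1 x.2.2) := by
  constructor
  · intro a b k ha hk hkb hab
    have hmem := mem_J n a b k hn ha hk hkb hab
    have hred : Reducible (AddT (staircase n) (minT (staircase n)) a b k) a b :=
      (red_J n a b k hn ha hk hkb hab a b).mpr ⟨rfl, rfl⟩
    refine ⟨hmem, DecT (AddT (staircase n) (minT (staircase n)) a b k) a b,
      dec_cov hmem hred, ?_⟩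
    intro S hS
    obtain ⟨x, y, hrxy, rfl⟩ := cov_eq_dec hmem hS
    obtain ⟨rfl, rfl⟩ := (red_J n a b k hn ha hk hkb hab x y).mp hrxy
    rfl
  · intro T hTji
    obtain ⟨hT, S0, hS0cov, hS0uniq⟩ := hTji
    obtain ⟨a, b, hred, hS0⟩ := cov_eq_dec hT hS0cov
    have hc := red_cell hT hred
    have hpos : 1 ≤ T a b := by
      have h2 := hred.2
      rw [extT_pos T a b hc.1 hc.2.1] at h2
      omega
    have huniq : ∀ x y, Reducible T x y → x = a ∧ y = b := by
      intro x y hxy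
      have h1 := hS0uniq (DecT T x y) (dec_cov hT hxy)
      rw [hS0] at h1
      by_contra hne
      have h2 := congrFun (congrFun h1 a) b
      unfold DecT at h2
      rw [if_neg (fun hcon => hne ⟨hcon.1.symm, hcon.2.symm⟩),
        if_pos ⟨rfl, rfl⟩] at h2
      omega
    obtain ⟨k, hk1, hkb, hTab, hTeq⟩ := structure_lemma hn hT hred huniq
    have habn : a + b ≤ n - 1 := by
      have := hc.2.2
      have := hc.1
      have := hc.2.1
      simp only [staircase] at *
      omega
    refine ⟨(a, b, k), ⟨⟨hc.1, hk1, hkb, habn⟩, hTeq⟩, ?_⟩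
    rintro ⟨a', b', k'⟩ ⟨⟨ha', hk', hk'b, hab'⟩, hTeq'⟩
    dsimp only at ha' hk' hk'b hab' hTeq' ⊢
    have hred' : Reducible T a' b' := by
      rw [hTeq']
      exact (red_J n a' b' k' hn ha' hk' hk'b hab' a' b').mpr ⟨rfl, rfl⟩
    obtain ⟨ea, eb⟩ := huniq a' b' hred'
    subst ea
    subst eb
    have e := congrFun (congrFun hTeq' a') b'
    rw [J_apply, if_pos hc, if_pos ⟨le_rfl, le_rfl⟩] at e
    have : k' = k := by omega
    rw [this]
end

section
/- For n ≥ 2, the map ψ: (a,b,k) ↦ Add(T⁰_{n-1}; a,b,k) is a poset isomorphism from Φ_n = {(a,b,k) ∈ ℙ³ : 1 ≤ k ≤ b ≤ n-1-a} with order (a,b,k) ≤ (a',b',k') iff a ≥ a', b ≥ b', k ≤ k', onto the poset Q_n of join-irreducibles of M_n. -/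
/-- The set `Φ_n = {(a,b,k) ∈ ℙ³ : 1 ≤ k ≤ b ≤ n-1-a}`. -/
def PhiSet (n : ℕ) : Set (ℕ × ℕ × ℕ) :=
  {x | 1 ≤ x.1 ∧ 1 ≤ x.2.2 ∧ x.2.2 ≤ x.2.1 ∧ x.1 + x.2.1 ≤ n - 1}

/- ############ auxiliary development ############ -/

def dec (T : ℕ → ℕ → ℕ) (c d : ℕ) : ℕ → ℕ → ℕ :=
  fun u v => if u = c ∧ v = d then T u v - 1 else T u v

lemma extT_cell {T : ℕ → ℕ → ℕ} {u v : ℕ} (hu : 1 ≤ u) (hv : 1 ≤ v) :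
    ExtT T u v = T u v := by
  unfold ExtT
  rw [if_neg (by omega), if_neg (by omega)]

lemma le_def2 {S T : ℕ → ℕ → ℕ} : S ≤ T ↔ ∀ u v, S u v ≤ T u v := by
  constructor
  · intro h u v; exact h u v
  · intro h u; exact fun v => h u v

lemma lt_def2 {S T : ℕ → ℕ → ℕ} : S < T ↔ (∀ u v, S u v ≤ T u v) ∧ ∃ u v, S u v < T u v := by
  rw [lt_iff_le_and_ne, le_def2]
  constructor
  · rintro ⟨h1, h2⟩
    refine ⟨h1, ?_⟩
    by_contra hc
    push_neg at hc
    exact h2 (funext fun u => funext fun v => le_antisymm (h1 u v) (hc u v))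
  · rintro ⟨h1, u, v, h2⟩
    exact ⟨h1, fun he => absurd (congrFun (congrFun he u) v) (by omega)⟩

lemma entry_ge {n : ℕ} {T : ℕ → ℕ → ℕ} (hT : IsSSYTShape (staircase n) T) :
    ∀ u v, CellOf (staircase n) u v → u ≤ T u v := by
  intro u
  induction u using Nat.strong_induction_on with
  | _ u ih =>
    intro v hc
    obtain ⟨hu, hv, hvl⟩ := hc
    have hcol := hT.2.2 u v ⟨hu, hv, hvl⟩
    rw [extT_cell hu hv] at hcol
    rcases Nat.eq_or_lt_of_le hu with h1 | h2
    · simp [ExtT, ← h1] at hcol ⊢; omega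
    · have hc' : CellOf (staircase n) (u-1) v := by
        refine ⟨by omega, hv, ?_⟩
        simp [staircase] at hvl ⊢; omega
      have := ih (u-1) (by omega) v hc'
      rw [extT_cell (by omega) hv] at hcol
      omega

lemma extT_dec {T : ℕ → ℕ → ℕ} {c d : ℕ} (hc : 1 ≤ c) (hd : 1 ≤ d) (u v : ℕ) :
    ExtT (dec T c d) u v = if u = c ∧ v = d then ExtT T u v - 1 else ExtT T u v := by
  unfold ExtT dec
  split_ifs <;> omega

lemma red_two {T : ℕ → ℕ → ℕ} {c d : ℕ} (hcell : CellOf (staircase n) c d)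
    (hr : Reducible T c d) : 2 ≤ T c d := by
  obtain ⟨hc, hd, _⟩ := hcell
  have h2 := hr.2
  rw [extT_cell hc hd] at h2
  omega

lemma dec_mem_s5 {n : ℕ} {T : ℕ → ℕ → ℕ} (hT : MnMem n T)
    (hcell : CellOf (staircase n) c d) (hr : Reducible T c d) :
    MnMem n (dec T c d) := by
  obtain ⟨⟨hz, hrow, hcol⟩, hle⟩ := hT
  obtain ⟨hc, hd, hdl⟩ := hcell
  obtain ⟨hr1, hr2⟩ := hr
  refine ⟨⟨?_, ?_, ?_⟩, ?_⟩
  · intro u v huv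
    unfold dec
    rw [if_neg]
    · exact hz u v huv
    · rintro ⟨rfl, rfl⟩; exact huv ⟨hc, hd, hdl⟩
  · intro u v hcell'
    rw [extT_dec hc hd, extT_dec hc hd]
    have h := hrow u v hcell'
    split_ifs with h1 h2 h2
    · omega
    · obtain ⟨rfl, h1⟩ := h1; omega
    · obtain ⟨rfl, rfl⟩ := h2; omega
    · exact h
  · intro u v hcell'
    have h := hcol u v hcell'
    rw [extT_dec hc hd, extT_dec hc hd]
    split_ifs with ha hb hb
    · omega
    · omega
    · obtain ⟨rfl, rfl⟩ := hb
      rw [extT_cell hc hd]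
      rw [extT_cell hc hd] at hr2
      omega
    · exact h
  · intro u v
    unfold dec
    have := hle u v
    split_ifs <;> omega

lemma dec_lt_s5 {n : ℕ} {T : ℕ → ℕ → ℕ} (hcell : CellOf (staircase n) c d)
    (hr : Reducible T c d) : dec T c d < T := by
  have h2 := red_two hcell hr
  rw [lt_def2]
  constructor
  · intro u v; unfold dec; split_ifs <;> omega
  · exact ⟨c, d, by unfold dec; rw [if_pos ⟨rfl, rfl⟩]; omega⟩

lemma between {n : ℕ} {S T : ℕ → ℕ → ℕ} (hS : MnMem n S) (hT : MnMem n T)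
    (hlt : S < T) :
    ∃ c d, CellOf (staircase n) c d ∧ Reducible T c d ∧ S ≤ dec T c d := by
  rw [lt_def2] at hlt
  obtain ⟨hle, u0, v0, hne⟩ := hlt
  have hP : ∃ u, ∃ v, S u v < T u v := ⟨u0, v0, hne⟩
  classical
  set c := Nat.find hP with hcdef
  obtain ⟨v1, hv1⟩ := Nat.find_spec hP
  have hQ : ∃ v, S c v < T c v := ⟨v1, hv1⟩
  set d := Nat.find hQ with hddef
  have hcd : S c d < T c d := Nat.find_spec hQ
  have hminu : ∀ u v, u < c → S u v = T u v := by
    intro u v hu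
    have := Nat.find_min hP hu
    push_neg at this
    exact le_antisymm (hle u v) (this v)
  have hminv : ∀ v, v < d → S c v = T c v := by
    intro v hv
    have := Nat.find_min hQ hv
    push_neg at this
    exact le_antisymm (hle c v) this
  have hcell : CellOf (staircase n) c d := by
    by_contra hnc
    have := hT.1.1 c d hnc
    omega
  obtain ⟨hc, hd, hdl⟩ := hcell
  have hge : c ≤ S c d := entry_ge hS.1 c d ⟨hc, hd, hdl⟩
  have hred : Reducible T c d := by
    constructor
    · rw [extT_cell hc hd]
      rcases Nat.eq_or_lt_of_le hd with h1 | h1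
      · unfold ExtT
        rw [if_pos (by omega)]
        omega
      · have hcell' : CellOf (staircase n) c (d-1) := ⟨hc, by omega, by omega⟩
        have hrowS := hS.1.2.1 c d ⟨hc, hd, hdl⟩
        rw [extT_cell hc hd, extT_cell hc (by omega)] at hrowS
        rw [extT_cell hc (by omega)]
        have := hminv (d-1) (by omega)
        omega
    · rw [extT_cell hc hd]
      rcases Nat.eq_or_lt_of_le hc with h1 | h1
      · unfold ExtT
        rw [if_neg (by omega), if_pos (by omega)]
        omega
      · have hcell' : CellOf (staircase n) (c-1) d := by
          refine ⟨by omega, hd, ?_⟩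
          simp [staircase] at hdl ⊢; omega
        have hcolS := hS.1.2.2 c d ⟨hc, hd, hdl⟩
        rw [extT_cell hc hd, extT_cell (by omega) hd] at hcolS
        rw [extT_cell (by omega) hd]
        have := hminu (c-1) d (by omega)
        omega
  refine ⟨c, d, ⟨hc, hd, hdl⟩, hred, ?_⟩
  rw [le_def2]
  intro u v
  unfold dec
  split_ifs with h
  · obtain ⟨rfl, rfl⟩ := h; omega
  · exact hle u v

lemma covBy_iff {n : ℕ} {S T : ℕ → ℕ → ℕ} (hT : MnMem n T) :
    MnCovBy n S T ↔ ∃ c d, CellOf (staircase n) c d ∧ Reducible T c d ∧ S = dec T c d := by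
  constructor
  · rintro ⟨hS, hlt, hcov⟩
    obtain ⟨c, d, hcell, hred, hle⟩ := between hS hT hlt
    refine ⟨c, d, hcell, hred, ?_⟩
    have hdm := dec_mem_s5 hT hcell hred
    have hdl := dec_lt_s5 hcell hred
    by_contra hne
    exact hcov (dec T c d) hdm ⟨lt_of_le_of_ne hle hne, hdl⟩
  · rintro ⟨c, d, hcell, hred, rfl⟩
    have h2 := red_two hcell hred
    refine ⟨dec_mem_s5 hT hcell hred, dec_lt_s5 hcell hred, ?_⟩
    rintro U hU ⟨h1, h2'⟩
    have hl1 := h1.le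
    have hl2 := h2'.le
    have hne1 := h1.ne
    have hne2 := h2'.ne
    rw [le_def2] at hl1 hl2
    rcases Nat.lt_or_ge (U c d) (T c d) with h | h
    · apply hne1
      funext u v
      by_cases hx : u = c ∧ v = d
      · obtain ⟨rfl, rfl⟩ := hx
        have h3 := hl1 u v
        have h4 := hl2 u v
        unfold dec at h3 ⊢
        rw [if_pos ⟨rfl, rfl⟩] at h3 ⊢
        omega
      · have h3 := hl1 u v
        have h4 := hl2 u v
        unfold dec at h3 ⊢
        rw [if_neg hx] at h3 ⊢
        omega
    · apply hne2
      funext u v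
      by_cases hx : u = c ∧ v = d
      · obtain ⟨rfl, rfl⟩ := hx
        have h4 := hl2 u v
        omega
      · have h3 := hl1 u v
        have h4 := hl2 u v
        unfold dec at h3
        rw [if_neg hx] at h3
        omega

lemma dec_inj {n : ℕ} {T : ℕ → ℕ → ℕ} {c d c' d' : ℕ}
    (hcell : CellOf (staircase n) c d) (hred : Reducible T c d)
    (heq : dec T c d = dec T c' d') : (c, d) = (c', d') := by
  have h2 := red_two hcell hred
  by_contra hne
  have h3 := congrFun (congrFun heq c) d
  unfold dec at h3
  rw [if_pos ⟨rfl, rfl⟩, if_neg (by simpa [Prod.ext_iff] using hne)] at h3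
  omega

lemma joinIrred_iff {n : ℕ} {T : ℕ → ℕ → ℕ} (hT : MnMem n T) :
    MnJoinIrred n T ↔
      ∃! p : ℕ × ℕ, CellOf (staircase n) p.1 p.2 ∧ Reducible T p.1 p.2 := by
  constructor
  · rintro ⟨-, S, hS, huniq⟩
    obtain ⟨c, d, hcell, hred, rfl⟩ := (covBy_iff hT).1 hS
    refine ⟨(c, d), ⟨hcell, hred⟩, ?_⟩
    rintro ⟨c', d'⟩ ⟨hcell', hred'⟩
    have hcov' : MnCovBy n (dec T c' d') T :=
      (covBy_iff hT).2 ⟨c', d', hcell', hred', rfl⟩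
    exact dec_inj hcell' hred' (huniq _ hcov')
  · rintro ⟨⟨c, d⟩, ⟨hcell, hred⟩, hu⟩
    refine ⟨hT, dec T c d, (covBy_iff hT).2 ⟨c, d, hcell, hred, rfl⟩, ?_⟩
    rintro S hS
    obtain ⟨c', d', hcell', hred', rfl⟩ := (covBy_iff hT).1 hS
    have := hu (c', d') ⟨hcell', hred'⟩
    rw [Prod.ext_iff] at this
    obtain ⟨h1, h2⟩ := this
    simp only at h1 h2
    rw [h1, h2]

lemma psi_apply {n a b k u v : ℕ} :
    AddT (staircase n) (minT (staircase n)) a b k u v =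
      if CellOf (staircase n) u v then (if a ≤ u ∧ b ≤ v then u + k else u) else 0 := by
  unfold AddT minT
  split_ifs <;> first | rfl | omega | tauto

lemma psi_mem {n a b k : ℕ} (ha : 1 ≤ a) (hk : 1 ≤ k) (hkb : k ≤ b) :
    MnMem n (AddT (staircase n) (minT (staircase n)) a b k) := by
  refine ⟨⟨?_, ?_, ?_⟩, ?_⟩ <;> intro u v
  · intro h
    rw [psi_apply, if_neg h]
  · intro hcell
    obtain ⟨hu, hv, hvl⟩ := hcell
    simp only [staircase] at hvl
    simp only [ExtT, psi_apply]
    split_ifs <;> simp -failIfUnchanged only [CellOf, staircase] at * <;> omega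
  · intro hcell
    obtain ⟨hu, hv, hvl⟩ := hcell
    simp only [staircase] at hvl
    simp only [ExtT, psi_apply]
    split_ifs <;> simp -failIfUnchanged only [CellOf, staircase] at * <;> omega
  · simp only [psi_apply]
    split_ifs <;> simp -failIfUnchanged only [CellOf, staircase] at * <;> omega

lemma psi_red_iff {n a b k u v : ℕ} (ha : 1 ≤ a) (hk : 1 ≤ k) (hkb : k ≤ b)
    (hcell : CellOf (staircase n) u v) :
    Reducible (AddT (staircase n) (minT (staircase n)) a b k) u v ↔ (u = a ∧ v = b) := by
  obtain ⟨hu, hv, hvl⟩ := hcell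
  simp only [staircase] at hvl
  simp only [Reducible, ExtT, psi_apply]
  split_ifs <;> simp -failIfUnchanged only [CellOf, staircase] at * <;> omega

lemma part_i {n : ℕ} {T : ℕ → ℕ → ℕ} {a b : ℕ} (hT : MnMem n T)
    (huniq : ∀ u v, CellOf (staircase n) u v → Reducible T u v → u = a ∧ v = b) :
    ∀ u v, CellOf (staircase n) u v → (u < a ∨ v < b) → T u v = u := by
  suffices key : ∀ m u v, u + v ≤ m → CellOf (staircase n) u v →
      (u < a ∨ v < b) → T u v = u by
    intro u v; exact key (u + v) u v le_rfl
  intro m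
  induction m with
  | zero => rintro u v h ⟨hu, hv, _⟩ _; omega
  | succ m ih =>
    rintro u v hm ⟨hu, hv, hvl⟩ hlow
    have hge : u ≤ T u v := entry_ge hT.1 u v ⟨hu, hv, hvl⟩
    have hrow := hT.1.2.1 u v ⟨hu, hv, hvl⟩
    have hcol := hT.1.2.2 u v ⟨hu, hv, hvl⟩
    rw [extT_cell hu hv] at hrow hcol
    have hnr : T u v ≤ ExtT T u (v - 1) ∨ T u v ≤ ExtT T (u - 1) v + 1 := by
      by_contra hcon
      push_neg at hcon
      have := huniq u v ⟨hu, hv, hvl⟩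
        ⟨by rw [extT_cell hu hv]; omega, by rw [extT_cell hu hv]; omega⟩
      omega
    rcases hnr with h | h
    · rcases Nat.eq_or_lt_of_le hv with h1 | h1
      · unfold ExtT at h
        rw [if_pos (by omega)] at h
        omega
      · have hcl : CellOf (staircase n) u (v - 1) := ⟨hu, by omega, by omega⟩
        have := ih u (v - 1) (by omega) hcl (by omega)
        rw [extT_cell hu (by omega)] at h
        omega
    · rcases Nat.eq_or_lt_of_le hu with h1 | h1
      · unfold ExtT at h
        rw [if_neg (by omega), if_pos (by omega)] at h
        omega
      · have hcl : CellOf (staircase n) (u - 1) v := by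
          refine ⟨by omega, hv, ?_⟩
          simp only [staircase] at hvl ⊢; omega
        have := ih (u - 1) v (by omega) hcl (by omega)
        rw [extT_cell (by omega) hv] at h
        omega

lemma part_ii {n : ℕ} {T : ℕ → ℕ → ℕ} {a b : ℕ} (hT : MnMem n T)
    (hcellab : CellOf (staircase n) a b) (hredab : Reducible T a b)
    (huniq : ∀ u v, CellOf (staircase n) u v → Reducible T u v → u = a ∧ v = b) :
    ∀ u v, CellOf (staircase n) u v → a ≤ u → b ≤ v → T u v = u + (T a b - a) := by
  obtain ⟨ha, hb, hbl⟩ := hcellab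
  -- k ≥ 1
  have hk1 : a + 1 ≤ T a b := by
    have h1 := hredab.1
    rw [extT_cell ha hb] at h1
    rcases Nat.eq_or_lt_of_le hb with h2 | h2
    · unfold ExtT at h1
      rw [if_pos (by omega)] at h1
      omega
    · have hcl : CellOf (staircase n) a (b - 1) := ⟨ha, by omega, by omega⟩
      have := part_i hT huniq a (b - 1) hcl (by omega)
      rw [extT_cell ha (by omega)] at h1
      omega
  suffices key : ∀ m u v, u + v ≤ m → CellOf (staircase n) u v →
      a ≤ u → b ≤ v → T u v = u + (T a b - a) by
    intro u v; exact key (u + v) u v le_rfl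
  intro m
  induction m with
  | zero => rintro u v h ⟨hu, hv, _⟩ _ _; omega
  | succ m ih =>
    rintro u v hm ⟨hu, hv, hvl⟩ hau hbv
    by_cases hab : u = a ∧ v = b
    · obtain ⟨rfl, rfl⟩ := hab; omega
    have hrow := hT.1.2.1 u v ⟨hu, hv, hvl⟩
    have hcol := hT.1.2.2 u v ⟨hu, hv, hvl⟩
    rw [extT_cell hu hv] at hrow hcol
    have hnr : T u v ≤ ExtT T u (v - 1) ∨ T u v ≤ ExtT T (u - 1) v + 1 := by
      by_contra hcon
      push_neg at hcon
      have := huniq u v ⟨hu, hv, hvl⟩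
        ⟨by rw [extT_cell hu hv]; omega, by rw [extT_cell hu hv]; omega⟩
      omega
    rcases hnr with h | h
    · rcases Nat.lt_or_ge b v with h1 | h1
      · -- v - 1 ≥ b : left neighbor in region
        have hcl : CellOf (staircase n) u (v - 1) := ⟨hu, by omega, by omega⟩
        have := ih u (v - 1) (by omega) hcl hau (by omega)
        rw [extT_cell hu (by omega)] at h hrow
        omega
      · -- v = b, so u > a; contradiction via column
        have hv_eq : v = b := by omega
        have hua : a < u := by omega
        -- left neighbor value is u
        have hleft : ExtT T u (v - 1) ≤ u := by
          rcases Nat.eq_or_lt_of_le hv with h2 | h2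
          · unfold ExtT; rw [if_pos (by omega)]
          · have hcl : CellOf (staircase n) u (v - 1) := ⟨hu, by omega, by omega⟩
            have := part_i hT huniq u (v - 1) hcl (by omega)
            rw [extT_cell hu (by omega)]
            omega
        -- up neighbor is in region
        have hcl : CellOf (staircase n) (u - 1) v := by
          refine ⟨by omega, hv, ?_⟩
          simp only [staircase] at hvl ⊢; omega
        have := ih (u - 1) v (by omega) hcl (by omega) hbv
        rw [extT_cell (by omega) hv] at hcol
        omega
    · rcases Nat.lt_or_ge a u with h1 | h1
      · -- up neighbor in region
        have hcl : CellOf (staircase n) (u - 1) v := by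
          refine ⟨by omega, hv, ?_⟩
          simp only [staircase] at hvl ⊢; omega
        have := ih (u - 1) v (by omega) hcl (by omega) hbv
        rw [extT_cell (by omega) hv] at h hcol
        omega
      · -- u = a, so v > b; contradiction via row
        have hu_eq : u = a := by omega
        have hvb : b < v := by omega
        have hup : ExtT T (u - 1) v ≤ u - 1 := by
          rcases Nat.eq_or_lt_of_le hu with h2 | h2
          · unfold ExtT; rw [if_neg (by omega), if_pos (by omega)]; omega
          · have hcl : CellOf (staircase n) (u - 1) v := by
              refine ⟨by omega, hv, ?_⟩
              simp only [staircase] at hvl ⊢; omega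
            have := part_i hT huniq (u - 1) v hcl (by omega)
            rw [extT_cell (by omega) hv]
            omega
        have hcl : CellOf (staircase n) u (v - 1) := ⟨hu, by omega, by omega⟩
        have := ih u (v - 1) (by omega) hcl hau (by omega)
        rw [extT_cell hu (by omega)] at hrow
        omega

lemma surj_lemma {n : ℕ} {T : ℕ → ℕ → ℕ} (hT : MnMem n T) {a b : ℕ}
    (hcellab : CellOf (staircase n) a b) (hredab : Reducible T a b)
    (huniq : ∀ u v, CellOf (staircase n) u v → Reducible T u v → u = a ∧ v = b) :
    (a, b, T a b - a) ∈ PhiSet n ∧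
      AddT (staircase n) (minT (staircase n)) a b (T a b - a) = T := by
  obtain ⟨ha, hb, hbl⟩ := hcellab
  simp only [staircase] at hbl
  set k := T a b - a with hkdef
  have hk1 : a + 1 ≤ T a b := by
    have h1 := hredab.1
    rw [extT_cell ha hb] at h1
    rcases Nat.eq_or_lt_of_le hb with h2 | h2
    · unfold ExtT at h1
      rw [if_pos (by omega)] at h1
      omega
    · have hcl : CellOf (staircase n) a (b - 1) := ⟨ha, by omega, by simp only [staircase]; omega⟩
      have := part_i hT huniq a (b - 1) hcl (by omega)
      rw [extT_cell ha (by omega)] at h1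
      omega
  -- k ≤ b via the bottom cell of column b
  have hkb : k ≤ b := by
    have hcl : CellOf (staircase n) (n - 1 - b) b :=
      ⟨by omega, hb, by simp only [staircase]; omega⟩
    have h2 := part_ii hT ⟨ha, hb, by simp only [staircase]; omega⟩ hredab huniq
      (n - 1 - b) b hcl (by omega) le_rfl
    have h3 := hT.2 (n - 1 - b) b
    omega
  have hmem : (a, b, k) ∈ PhiSet n := by
    simp only [PhiSet, Set.mem_setOf_eq]
    refine ⟨ha, by omega, hkb, by omega⟩
  refine ⟨hmem, ?_⟩
  funext u v
  rw [psi_apply]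
  by_cases hc : CellOf (staircase n) u v
  · rw [if_pos hc]
    by_cases hr : a ≤ u ∧ b ≤ v
    · rw [if_pos hr]
      exact (part_ii hT ⟨ha, hb, by simp only [staircase]; omega⟩ hredab huniq
        u v hc hr.1 hr.2).symm
    · rw [if_neg hr]
      exact (part_i hT huniq u v hc (by omega)).symm
  · rw [if_neg hc]
    exact (hT.1.1 u v hc).symm

lemma order_lemma {n : ℕ} (x : ℕ × ℕ × ℕ) (hx : x ∈ PhiSet n) (y : ℕ × ℕ × ℕ)
    (hy : y ∈ PhiSet n) :
    ((y.1 ≤ x.1 ∧ y.2.1 ≤ x.2.1 ∧ x.2.2 ≤ y.2.2) ↔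
      AddT (staircase n) (minT (staircase n)) x.1 x.2.1 x.2.2 ≤
        AddT (staircase n) (minT (staircase n)) y.1 y.2.1 y.2.2) := by
  obtain ⟨a, b, k⟩ := x
  obtain ⟨a', b', k'⟩ := y
  obtain ⟨ha, hk, hkb, hab⟩ := hx
  obtain ⟨ha', hk', hkb', hab'⟩ := hy
  simp only at *
  constructor
  · rintro ⟨h1, h2, h3⟩
    rw [le_def2]
    intro u v
    simp only [psi_apply]
    split_ifs <;> omega
  · intro h
    have h1 := h a b
    simp only [psi_apply] at h1
    rw [if_pos ⟨ha, by omega, by simp only [staircase]; omega⟩] at h1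
    rw [if_pos ⟨le_rfl, le_rfl⟩] at h1
    split_ifs at h1 <;> omega
/-- For `n ≥ 2`, `ψ : (a,b,k) ↦ Add(T⁰_{n-1}; a,b,k)` is a poset isomorphism
from `Φ_n` (with `(a,b,k) ≤ (a',b',k')` iff `a ≥ a'`, `b ≥ b'`, `k ≤ k'`)
onto the poset `Q_n` of join-irreducibles of `M_n` (entrywise order). -/
theorem stmt5 (n : ℕ) (hn : 2 ≤ n) :
    Set.BijOn
      (fun x : ℕ × ℕ × ℕ => AddT (staircase n) (minT (staircase n)) x.1 x.2.1 x.2.2)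
      (PhiSet n) {T | MnJoinIrred n T} ∧
    ∀ x ∈ PhiSet n, ∀ y ∈ PhiSet n,
      ((y.1 ≤ x.1 ∧ y.2.1 ≤ x.2.1 ∧ x.2.2 ≤ y.2.2) ↔
        AddT (staircase n) (minT (staircase n)) x.1 x.2.1 x.2.2 ≤
          AddT (staircase n) (minT (staircase n)) y.1 y.2.1 y.2.2) := by
  refine ⟨⟨?_, ?_, ?_⟩, fun x hx y hy => order_lemma x hx y hy⟩
  · -- MapsTo
    rintro ⟨a, b, k⟩ hx
    simp only [PhiSet, Set.mem_setOf_eq] at hx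
    obtain ⟨ha, hk, hkb, hab⟩ := hx
    simp only [Set.mem_setOf_eq]
    have hcellab : CellOf (staircase n) a b :=
      ⟨ha, by omega, by simp only [staircase]; omega⟩
    have hmem := psi_mem (n := n) ha hk hkb
    rw [joinIrred_iff hmem]
    refine ⟨(a, b), ⟨hcellab, (psi_red_iff ha hk hkb hcellab).2 ⟨rfl, rfl⟩⟩, ?_⟩
    rintro ⟨u, v⟩ ⟨hcell, hred⟩
    have := (psi_red_iff ha hk hkb hcell).1 hred
    simp only [Prod.mk.injEq]
    exact this
  · -- InjOn
    intro x hx y hy heq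
    have h1 := (order_lemma x hx y hy).2 (le_of_eq heq)
    have h2 := (order_lemma y hy x hx).2 (le_of_eq heq.symm)
    obtain ⟨a, b, k⟩ := x
    obtain ⟨a', b', k'⟩ := y
    simp only at h1 h2
    simp only [Prod.mk.injEq]
    omega
  · -- SurjOn
    intro T hTj
    simp only [Set.mem_setOf_eq] at hTj
    have hmem := hTj.1
    obtain ⟨⟨a, b⟩, ⟨hcell, hred⟩, hu⟩ := (joinIrred_iff hmem).1 hTj
    have huniq : ∀ u v, CellOf (staircase n) u v → Reducible T u v → u = a ∧ v = b := by
      intro u v hc hr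
      have := hu (u, v) ⟨hc, hr⟩
      rw [Prod.ext_iff] at this
      exact this
    obtain ⟨hphi, heq⟩ := surj_lemma hmem hcell hred huniq
    exact ⟨(a, b, T a b - a), hphi, heq⟩
end

section
/- The number of SSYT of shape δ_{n-1} = (n-2, n-3, ..., 1) with all entries at most n-1 equals 2^{C(n-1,2)}. -/
section Part2

lemma ExtT_pos (T : ℕ→ℕ→ℕ) {a b : ℕ} (ha : 1 ≤ a) (hb : 1 ≤ b) : ExtT T a b = T a b := by
  unfold ExtT
  rw [if_neg (by omega), if_neg (by omega)]

lemma ExtT_row0 (T : ℕ→ℕ→ℕ) {b : ℕ} (hb : 1 ≤ b) : ExtT T 0 b = 0 := by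
  unfold ExtT
  rw [if_neg (by omega), if_pos rfl]

lemma ExtT_col0 (T : ℕ→ℕ→ℕ) (a : ℕ) : ExtT T a 0 = a := rfl

variable {lam : ℕ → ℕ} {T : ℕ → ℕ → ℕ}

lemma cell_def {a b : ℕ} : CellOf lam a b ↔ 1 ≤ a ∧ 1 ≤ b ∧ b ≤ lam a := Iff.rfl

lemma row_first (h : IsSSYTShape lam T) {a : ℕ} (hc : CellOf lam a 1) : a ≤ T a 1 := by
  have := h.2.1 a 1 hc
  rwa [show (1:ℕ) - 1 = 0 from rfl, ExtT_col0, ExtT_pos T hc.1 le_rfl] at this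

lemma row_le (h : IsSSYTShape lam T) {a b : ℕ} (hc : CellOf lam a b) (hb : 2 ≤ b) :
    T a (b-1) ≤ T a b := by
  have := h.2.1 a b hc
  rwa [ExtT_pos T hc.1 (by omega), ExtT_pos T hc.1 (by omega)] at this

lemma col_first (h : IsSSYTShape lam T) {b : ℕ} (hc : CellOf lam 1 b) : 1 ≤ T 1 b := by
  have := h.2.2 1 b hc
  rwa [show (1:ℕ) - 1 = 0 from rfl, ExtT_row0 T hc.2.1, ExtT_pos T le_rfl hc.2.1] at this

lemma col_lt (h : IsSSYTShape lam T) {a b : ℕ} (hc : CellOf lam a b) (ha : 2 ≤ a) :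
    T (a-1) b < T a b := by
  have := h.2.2 a b hc
  rwa [ExtT_pos T (by omega) hc.2.1, ExtT_pos T hc.1 hc.2.1] at this

/-- entries in a row are monotone along the row -/
lemma row_chain (h : IsSSYTShape lam T) {a : ℕ} :
    ∀ b' b, 1 ≤ b → b ≤ b' → CellOf lam a b' → T a b ≤ T a b' := by
  intro b'
  induction b' with
  | zero => intro b h1 h2 _; omega
  | succ b' ih =>
    intro b h1 h2 hc
    rcases Nat.eq_or_lt_of_le h2 with heq | hlt
    · subst heq; exact le_rfl
    · have hcb : CellOf lam a b' := by
        have := hc.2.2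
        exact ⟨hc.1, by omega, by omega⟩
      have h3 : T a b ≤ T a b' := ih b h1 (by omega) hcb
      have h4 : T a ((b'+1)-1) ≤ T a (b'+1) := row_le h hc (by omega)
      simp only [Nat.add_sub_cancel] at h4
      omega

/-- entries are at least the row index, given the shape is decreasing -/
lemma col_ge (h : IsSSYTShape lam T) (hlam : ∀ a, 2 ≤ a → lam a ≤ lam (a-1)) :
    ∀ a b, CellOf lam a b → a ≤ T a b := by
  intro a
  induction a with
  | zero => intro b hc; exact absurd hc.1 (by omega)
  | succ a ih =>
    intro b hc
    by_cases ha : a = 0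
    · subst ha
      simp only [Nat.zero_add] at hc ⊢
      exact col_first h hc
    · have hl : lam (a+1) ≤ lam a := by
        have := hlam (a+1) (by omega)
        rwa [Nat.add_sub_cancel] at this
      have hc' : CellOf lam a b := ⟨by omega, hc.2.1, by have := hc.2.2; omega⟩
      have h2 := ih b hc'
      have h3 := col_lt h hc (by omega)
      rw [Nat.add_sub_cancel] at h3
      omega

/-- generic prefix-count lemma -/
lemma filter_downclosed_card {L : ℕ} {P : ℕ → Prop} [DecidablePred P]
    (hdc : ∀ b b', 1 ≤ b → b ≤ b' → b' ≤ L → P b' → P b) :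
    ∀ b, 1 ≤ b → b ≤ L → (P b ↔ b ≤ ((Finset.Icc 1 L).filter P).card) := by
  intro b hb1 hbL
  constructor
  · intro hPb
    have hsub : Finset.Icc 1 b ⊆ (Finset.Icc 1 L).filter P := by
      intro c hc
      rw [Finset.mem_Icc] at hc
      rw [Finset.mem_filter, Finset.mem_Icc]
      exact ⟨⟨hc.1, by omega⟩, hdc c b hc.1 hc.2 hbL hPb⟩
    have := Finset.card_le_card hsub
    rwa [Nat.card_Icc, Nat.add_sub_cancel] at this
  · intro hcard
    by_contra hPb
    have hsub : (Finset.Icc 1 L).filter P ⊆ Finset.Icc 1 (b-1) := by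
      intro c hc
      rw [Finset.mem_filter, Finset.mem_Icc] at hc
      rw [Finset.mem_Icc]
      refine ⟨hc.1.1, ?_⟩
      by_contra hcb
      exact hPb (hdc b c hb1 (by omega) hc.1.2 hc.2)
    have := Finset.card_le_card hsub
    rw [Nat.card_Icc] at this
    omega

end Part2

open Polynomial Finset

noncomputable section

/-- Box of interlacing sequences. -/
def BoxF (m : ℕ) (w : Fin (m+1) → ℕ) : Finset (Fin m → ℕ) :=
  Fintype.piFinset (fun i => Finset.Icc (w i.castSucc) (w i.succ - 1))

/-- Number of shifted GT patterns with top row `w`. -/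
def Cnt : (m : ℕ) → (Fin m → ℕ) → ℕ
  | 0, _ => 1
  | (m+1), w => ∑ v ∈ BoxF m w, Cnt m v

lemma mem_BoxF {m : ℕ} {w : Fin (m+1) → ℕ} {v : Fin m → ℕ} :
    v ∈ BoxF m w ↔ ∀ i : Fin m, w i.castSucc ≤ v i ∧ v i ≤ w i.succ - 1 := by
  simp [BoxF, Fintype.mem_piFinset]

lemma strictMono_of_mem_BoxF {m : ℕ} {w : Fin (m+1) → ℕ} (hw : StrictMono w)
    {v : Fin m → ℕ} (hv : v ∈ BoxF m w) : StrictMono v := by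
  rw [mem_BoxF] at hv
  intro i j hij
  have h1 := (hv i).2
  have h2 := (hv j).1
  have hw1 : w i.succ ≤ w j.castSucc := by
    apply hw.monotone
    simp [Fin.le_def]
    omega
  have hw0 : w i.castSucc < w i.succ := hw (by simp [Fin.lt_def])
  omega

/-- The Vandermonde determinant of a sequence of naturals, in ℤ. -/
def VD (m : ℕ) (v : Fin m → ℕ) : ℤ := (Matrix.vandermonde (fun i => ((v i : ℤ)))).det

lemma VD_eq_desc (m : ℕ) (v : Fin m → ℕ) :
    VD m v = (Matrix.of fun (i j : Fin m) => (descPochhammer ℤ (j:ℕ)).eval ((v i : ℤ))).det :=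
  Matrix.det_eval_matrixOfPolynomials_eq_det_vandermonde _ _
    (fun i => descPochhammer_natDegree ℤ i) (fun i => monic_descPochhammer ℤ i)

lemma desc_diff (j : ℕ) (x : ℤ) :
    (descPochhammer ℤ (j+1)).eval (x+1) - (descPochhammer ℤ (j+1)).eval x
      = ((j:ℤ)+1) * (descPochhammer ℤ j).eval x := by
  nth_rewrite 1 [descPochhammer_succ_left]
  nth_rewrite 1 [descPochhammer_succ_right]
  simp [eval_comp]
  ring

lemma desc_telescope (j a b : ℕ) (hab : a ≤ b) :
    ((j:ℤ)+1) * ∑ s ∈ Finset.Ico a b, (descPochhammer ℤ j).eval ((s:ℤ))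
      = (descPochhammer ℤ (j+1)).eval ((b:ℤ)) - (descPochhammer ℤ (j+1)).eval ((a:ℤ)) := by
  induction b with
  | zero => interval_cases a; simp
  | succ b ih =>
    rcases Nat.lt_or_ge a (b+1) with h | h
    · have hab' : a ≤ b := by omega
      rw [Finset.sum_Ico_succ_top hab', mul_add, ih hab', Nat.cast_succ]
      have := desc_diff j (b : ℤ)
      ring_nf
      ring_nf at this ⊢
      omega
    · have : a = b + 1 := by omega
      subst this
      simp

lemma prod_fin_succ_factorial (m : ℕ) : ∏ j : Fin m, ((j:ℤ)+1) = (m.factorial : ℤ) := by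
  induction m with
  | zero => simp
  | succ m ih =>
    rw [Fin.prod_univ_castSucc]
    simp only [Fin.coe_castSucc]
    rw [ih, Nat.factorial_succ]
    push_cast
    ring

lemma key_det (m : ℕ) (w : Fin (m+1) → ℕ) (hw : StrictMono w) :
    (m.factorial : ℤ) * ∑ v ∈ BoxF m w, VD m v = VD (m+1) w := by
  classical
  -- row function
  set g : Fin m → ℕ → (Fin m → ℤ) :=
    fun _ s => fun j => (descPochhammer ℤ ((j:ℕ))).eval ((s:ℤ)) with hg
  set A : Fin m → Finset ℕ := fun i => Finset.Icc (w i.castSucc) (w i.succ - 1) with hA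
  -- Step 1+2: sum of determinants = determinant of summed rows
  have step12 : ∑ v ∈ BoxF m w, VD m v
      = (Matrix.of fun (i j : Fin m) =>
          ∑ s ∈ A i, (descPochhammer ℤ ((j:ℕ))).eval ((s:ℤ))).det := by
    have hsum := (Matrix.detRowAlternating :
        (Fin m → ℤ) [⋀^Fin m]→ₗ[ℤ] ℤ).toMultilinearMap.map_sum_finset g A
    calc ∑ v ∈ BoxF m w, VD m v
        = ∑ v ∈ Fintype.piFinset A, (Matrix.detRowAlternating : (Fin m → ℤ) [⋀^Fin m]→ₗ[ℤ] ℤ)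
            (fun i => g i (v i)) := by
          apply Finset.sum_congr rfl
          intro v _
          rw [VD_eq_desc]
          rfl
      _ = (Matrix.detRowAlternating : (Fin m → ℤ) [⋀^Fin m]→ₗ[ℤ] ℤ)
            (fun i => ∑ s ∈ A i, g i s) := hsum.symm
      _ = (Matrix.of fun (i j : Fin m) =>
            ∑ s ∈ A i, (descPochhammer ℤ ((j:ℕ))).eval ((s:ℤ))).det := by
          congr 1
          funext i
          funext j
          simp [hg, Finset.sum_apply]
  -- Step 3: multiply the columns
  have step3 : (m.factorial : ℤ) * ∑ v ∈ BoxF m w, VD m v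
      = (Matrix.of fun (i j : Fin m) =>
          (descPochhammer ℤ ((j:ℕ)+1)).eval ((w i.succ : ℤ))
            - (descPochhammer ℤ ((j:ℕ)+1)).eval ((w i.castSucc : ℤ))).det := by
    rw [step12, ← prod_fin_succ_factorial m]
    rw [← Matrix.det_mul_row (fun j : Fin m => ((j:ℤ)+1))]
    congr 1
    ext i j
    simp only [Matrix.of_apply]
    have hle : w i.castSucc ≤ w i.succ := le_of_lt (hw (by simp [Fin.lt_def]))
    have hpos : 1 ≤ w i.succ := by
      have := hw (show (i.castSucc : Fin (m+1)) < i.succ by simp [Fin.lt_def])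
      omega
    have hIcc : A i = Finset.Ico (w i.castSucc) (w i.succ) := by
      rw [hA]
      have : w i.succ = (w i.succ - 1).succ := by omega
      rw [this, Nat.succ_eq_add_one, Finset.Ico_add_one_right_eq_Icc]
    rw [hIcc]
    exact desc_telescope _ _ _ hle
  rw [step3]
  -- Step 5: bordered determinant
  set MM : Matrix (Fin (m+1)) (Fin (m+1)) ℤ :=
    Matrix.of (fun i j => (descPochhammer ℤ ((j:ℕ))).eval ((w i : ℤ))) with hMM
  set G : Matrix (Fin (m+1)) (Fin (m+1)) ℤ :=
    fun i => Fin.cases (MM 0) (fun i' => fun j => MM i'.succ j - MM i'.castSucc j) i with hG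
  have hdet1 : MM.det = G.det := by
    apply Matrix.det_eq_of_forall_row_eq_smul_add_pred (c := fun _ => 1)
    · intro j; rfl
    · intro i j
      simp only [hG, Fin.cases_succ]
      ring
  have hG0 : ∀ j, G 0 j = (descPochhammer ℤ ((j:ℕ))).eval ((w 0 : ℤ)) := fun j => rfl
  have hGs : ∀ (i : Fin m) (j : Fin (m+1)), G i.succ j = MM i.succ j - MM i.castSucc j := by
    intro i j
    simp only [hG, Fin.cases_succ]
  have hdet2 : G.det = (Matrix.of fun (i j : Fin m) =>
      (descPochhammer ℤ ((j:ℕ)+1)).eval ((w i.succ : ℤ))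
        - (descPochhammer ℤ ((j:ℕ)+1)).eval ((w i.castSucc : ℤ))).det := by
    rw [Matrix.det_succ_column_zero]
    have hsingle : (∑ i : Fin (m+1), (-1)^(i:ℕ) * G i 0 * (G.submatrix i.succAbove Fin.succ).det)
        = (-1)^((0:Fin (m+1)):ℕ) * G 0 0 * (G.submatrix (0:Fin (m+1)).succAbove Fin.succ).det := by
      apply Finset.sum_eq_single
      · intro i _ hi
        obtain ⟨i', rfl⟩ := Fin.exists_succ_eq.mpr hi
        rw [hGs]
        simp [hMM, descPochhammer_zero]
      · intro h
        exact absurd (Finset.mem_univ _) h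
    rw [hsingle]
    have h00 : G 0 0 = 1 := by rw [hG0]; simp [descPochhammer_zero]
    rw [h00]
    simp only [Fin.val_zero, pow_zero, one_mul, mul_one, Fin.succAbove_zero]
    congr 1
  have hVD : VD (m+1) w = MM.det := VD_eq_desc _ _
  rw [hVD, hdet1, hdet2]

def SFp (m : ℕ) : ℕ := ∏ x ∈ Finset.range m, x.factorial

lemma SFp_succ (m : ℕ) : SFp (m+1) = SFp m * m.factorial := Finset.prod_range_succ _ _

lemma SFp_pos (m : ℕ) : 0 < SFp m := Finset.prod_pos (fun i _ => Nat.factorial_pos i)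

lemma P1 : ∀ (m : ℕ) (w : Fin m → ℕ), StrictMono w → (SFp m : ℤ) * Cnt m w = VD m w := by
  intro m
  induction m with
  | zero =>
    intro w _
    simp [SFp, Cnt, VD, Matrix.det_fin_zero]
  | succ m ih =>
    intro w hw
    have h1 : (Cnt (m+1) w : ℤ) = ∑ v ∈ BoxF m w, (Cnt m v : ℤ) := by simp [Cnt]
    have h2 : ((SFp m : ℤ) * (m.factorial:ℤ)) * ∑ v ∈ BoxF m w, (Cnt m v : ℤ)
        = (m.factorial : ℤ) * ∑ v ∈ BoxF m w, ((SFp m : ℤ) * (Cnt m v : ℤ)) := by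
      rw [Finset.mul_sum, Finset.mul_sum]
      apply Finset.sum_congr rfl
      intros
      ring
    have h3 : ∀ v ∈ BoxF m w, (SFp m : ℤ) * (Cnt m v : ℤ) = VD m v := fun v hv =>
      ih v (strictMono_of_mem_BoxF hw hv)
    rw [SFp_succ]
    push_cast
    rw [h1, h2, Finset.sum_congr rfl h3]
    exact key_det m w hw

lemma sum_card_Ioi (m : ℕ) : ∑ i : Fin m, (Finset.Ioi i).card = m.choose 2 := by
  have h1 : ∀ i : Fin m, (Finset.Ioi i).card = m - 1 - (i:ℕ) := fun i => Fin.card_Ioi i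
  rw [Finset.sum_congr rfl (fun i _ => h1 i)]
  rw [Fin.sum_univ_eq_sum_range (fun k => m - 1 - k) m]
  rw [← Finset.sum_range_reflect]
  have h2 : ∀ j ∈ Finset.range m, m - 1 - (m - 1 - j) = j := by
    intro j hj
    rw [Finset.mem_range] at hj
    omega
  rw [Finset.sum_congr rfl h2, Finset.sum_range_id, Nat.choose_two_right]

lemma VD_double (m : ℕ) :
    VD m (fun i => 2*(i:ℕ)) = 2^(m.choose 2) * VD m (fun i => (i:ℕ)) := by
  unfold VD
  rw [Matrix.det_vandermonde, Matrix.det_vandermonde]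
  have : ∀ i : Fin m, ∏ j ∈ Finset.Ioi i, (((2*(j:ℕ) : ℕ) : ℤ) - ((2*(i:ℕ) : ℕ) : ℤ))
      = 2^((Finset.Ioi i).card) * ∏ j ∈ Finset.Ioi i, (((j:ℕ) : ℤ) - ((i:ℕ) : ℤ)) := by
    intro i
    rw [← Finset.prod_const, ← Finset.prod_mul_distrib]
    apply Finset.prod_congr rfl
    intros
    push_cast
    ring
  rw [Finset.prod_congr rfl (fun i _ => this i), Finset.prod_mul_distrib,
    Finset.prod_pow_eq_pow_sum, sum_card_Ioi]

lemma Cnt_double (m : ℕ) : Cnt (m+1) (fun i => 2*(i:ℕ)) = 2^((m+1).choose 2) := by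
  have hsm : StrictMono (fun i : Fin (m+1) => 2*(i:ℕ)) := by
    intro i j hij
    simp only []
    have : (i:ℕ) < (j:ℕ) := hij
    omega
  have hp := P1 (m+1) (fun i => 2*(i:ℕ)) hsm
  rw [VD_double] at hp
  have hid : VD (m+1) (fun i => (i:ℕ)) = (Nat.superFactorial m : ℤ) := by
    unfold VD
    have := Matrix.det_vandermonde_id_eq_superFactorial (R := ℤ) m
    convert this using 3
  have hsf : SFp (m+1) = Nat.superFactorial m := Nat.prod_range_succ_factorial m
  rw [hid, hsf] at hp
  have hpos : (0:ℤ) < (Nat.superFactorial m : ℤ) := by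
    have : 0 < Nat.superFactorial m := by
      rw [← Nat.prod_range_succ_factorial m]
      exact Finset.prod_pos (fun i _ => Nat.factorial_pos i)
    exact_mod_cast this
  have : (Nat.superFactorial m : ℤ) * (Cnt (m+1) (fun i => 2*(i:ℕ)) : ℤ)
      = (Nat.superFactorial m : ℤ) * (2^((m+1).choose 2) : ℤ) := by
    rw [hp]; ring
  have := mul_left_cancel₀ (ne_of_gt hpos) this
  exact_mod_cast this

/-- the shape (row lengths) determined by shifted boundary data `w` -/
def lamOf (m : ℕ) (w : Fin m → ℕ) : ℕ → ℕ := fun a =>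
  if h : 1 ≤ a ∧ a ≤ m then w ⟨m - a, by omega⟩ - (m - a) else 0

/-- SSYT of shape `lamOf m w` with entries at most `m` -/
def SS (m : ℕ) (w : Fin m → ℕ) : Set (ℕ → ℕ → ℕ) :=
  {T | IsSSYTShape (lamOf m w) T ∧ ∀ a b, T a b ≤ m}

lemma lamOf_eq {m : ℕ} (w : Fin m → ℕ) {a : ℕ} (h1 : 1 ≤ a) (h2 : a ≤ m) :
    lamOf m w a = w ⟨m - a, by omega⟩ - (m - a) := by
  unfold lamOf
  rw [dif_pos ⟨h1, h2⟩]

lemma lamOf_eq_zero {m : ℕ} (w : Fin m → ℕ) {a : ℕ} (h : a = 0 ∨ m < a) :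
    lamOf m w a = 0 := by
  unfold lamOf
  rw [dif_neg (by omega)]

lemma strictMono_le {k : ℕ} {u : Fin k → ℕ} (hu : StrictMono u) :
    ∀ iv (hiv : iv < k), iv ≤ u ⟨iv, hiv⟩ := by
  intro iv
  induction iv with
  | zero => intro hiv; exact Nat.zero_le _
  | succ j ih =>
    intro hiv
    have hj : j < k := by omega
    have h1 : u ⟨j, hj⟩ < u ⟨j+1, hiv⟩ := hu (by simp [Fin.lt_def])
    have h2 := ih hj
    omega

lemma lamOf_antitone {m : ℕ} {w : Fin m → ℕ} (hw : StrictMono w) :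
    ∀ a, 2 ≤ a → lamOf m w a ≤ lamOf m w (a-1) := by
  intro a ha
  by_cases h2 : a ≤ m
  · rw [lamOf_eq w (by omega) h2, lamOf_eq w (by omega) (by omega)]
    have hma : m - a < m := by omega
    have hma' : m - (a-1) < m := by omega
    have hlt : w ⟨m - a, hma⟩ < w ⟨m - (a-1), hma'⟩ := hw (by simp [Fin.lt_def]; omega)
    have e1 := strictMono_le hw (m - a) hma
    have e2 := strictMono_le hw (m - (a-1)) hma'
    omega
  · rw [lamOf_eq_zero w (Or.inr (by omega))]
    omega

lemma SS_zero (w : Fin 0 → ℕ) : SS 0 w = {fun _ _ => 0} := by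
  apply Set.eq_singleton_iff_unique_mem.mpr
  constructor
  · constructor
    · refine ⟨fun a b _ => rfl, fun a b hc => ?_, fun a b hc => ?_⟩
      · have h1 := hc.2.2
        have h2 := hc.2.1
        rw [lamOf_eq_zero w (by omega)] at h1
        omega
      · have h1 := hc.2.2
        have h2 := hc.2.1
        rw [lamOf_eq_zero w (by omega)] at h1
        omega
    · intro a b; exact le_rfl
  · intro T hT
    funext a b
    have := hT.2 a b
    omega

section Peel

variable {m : ℕ} {w : Fin (m+1) → ℕ} {T : ℕ → ℕ → ℕ}

/-- number of entries at most `m` in row `a` -/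
def xrowOf (m : ℕ) (w : Fin (m+1) → ℕ) (T : ℕ → ℕ → ℕ) (a : ℕ) : ℕ :=
  ((Finset.Icc 1 (lamOf (m+1) w a)).filter (fun b => T a b ≤ m)).card

def vOf (m : ℕ) (w : Fin (m+1) → ℕ) (T : ℕ → ℕ → ℕ) : Fin m → ℕ :=
  fun i => xrowOf m w T (m - (i:ℕ)) + (i:ℕ)

def TOf (m : ℕ) (T : ℕ → ℕ → ℕ) : ℕ → ℕ → ℕ :=
  fun a b => if T a b = m+1 then 0 else T a b

def PsiT (m : ℕ) (w : Fin (m+1) → ℕ) (v : Fin m → ℕ) (T' : ℕ → ℕ → ℕ) : ℕ → ℕ → ℕ :=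
  fun a b => if CellOf (lamOf (m+1) w) a b then (if b ≤ lamOf m v a then T' a b else m+1) else 0

lemma Pa (hw : StrictMono w) (hT : T ∈ SS (m+1) w) :
    ∀ a b, CellOf (lamOf (m+1) w) a b → (T a b ≤ m ↔ b ≤ xrowOf m w T a) := by
  intro a b hc
  apply filter_downclosed_card _ b hc.2.1 hc.2.2
  intro b1 b2 h1 h2 h3 hP
  have hc2 : CellOf (lamOf (m+1) w) a b2 := ⟨hc.1, by omega, h3⟩
  have := row_chain hT.1 b2 b1 h1 h2 hc2
  omega

lemma Pf (hw : StrictMono w) (hT : T ∈ SS (m+1) w) :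
    ∀ a b, CellOf (lamOf (m+1) w) a b → a ≤ T a b :=
  col_ge hT.1 (lamOf_antitone hw)

lemma Pg (hw : StrictMono w) (hT : T ∈ SS (m+1) w) :
    ∀ a, m+1 ≤ a → xrowOf m w T a = 0 := by
  intro a ha
  unfold xrowOf
  rcases Nat.eq_or_lt_of_le ha with heq | hlt
  · rw [Finset.card_eq_zero, Finset.filter_eq_empty_iff]
    intro b hb
    rw [Finset.mem_Icc] at hb
    have hcell : CellOf (lamOf (m+1) w) a b := ⟨by omega, hb.1, hb.2⟩
    have h1 := Pf hw hT a b hcell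
    omega
  · rw [lamOf_eq_zero w (Or.inr hlt)]
    simp

lemma Pc : xrowOf m w T a ≤ lamOf (m+1) w a := by
  unfold xrowOf
  calc ((Finset.Icc 1 (lamOf (m+1) w a)).filter _).card
      ≤ (Finset.Icc 1 (lamOf (m+1) w a)).card := Finset.card_le_card (Finset.filter_subset _ _)
    _ = lamOf (m+1) w a := by rw [Nat.card_Icc]; omega

lemma Pd (hw : StrictMono w) (hT : T ∈ SS (m+1) w) :
    ∀ a b, 1 ≤ a → CellOf (lamOf (m+1) w) (a+1) b → b ≤ xrowOf m w T a := by
  intro a b ha hc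
  have hanti := lamOf_antitone (m := m+1) (w := w) hw (a+1) (by omega)
  rw [Nat.add_sub_cancel] at hanti
  have hcb : CellOf (lamOf (m+1) w) a b := ⟨ha, hc.2.1, by have := hc.2.2; omega⟩
  have hlt := col_lt hT.1 hc (by omega)
  rw [Nat.add_sub_cancel] at hlt
  have hle := hT.2 (a+1) b
  rw [← Pa hw hT a b hcb]
  omega

end Peel

section Peel2
variable {m : ℕ} {w : Fin (m+1) → ℕ} {T : ℕ → ℕ → ℕ}

lemma lam'_eq (hw : StrictMono w) (hT : T ∈ SS (m+1) w) :
    ∀ a, 1 ≤ a → lamOf m (vOf m w T) a = xrowOf m w T a := by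
  intro a ha
  by_cases h2 : a ≤ m
  · rw [lamOf_eq _ ha h2]
    show (xrowOf m w T (m - (m-a)) + (m-a)) - (m-a) = _
    rw [Nat.sub_sub_self h2]
    omega
  · rw [lamOf_eq_zero _ (Or.inr (by omega)), Pg hw hT a (by omega)]

lemma vOf_mem_box (hw : StrictMono w) (hT : T ∈ SS (m+1) w) : vOf m w T ∈ BoxF m w := by
  rw [mem_BoxF]
  intro i
  have him : (i:ℕ) < m := i.2
  constructor
  · -- lower: w i.castSucc ≤ xrow (m-i) + i
    have hcell : ∀ b, 1 ≤ b → b ≤ lamOf (m+1) w ((m - (i:ℕ))+1) →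
        b ≤ xrowOf m w T (m - (i:ℕ)) := by
      intro b hb1 hb2
      exact Pd hw hT _ b (by omega) ⟨by omega, hb1, hb2⟩
    have hlam1 : lamOf (m+1) w ((m - (i:ℕ))+1) = w i.castSucc - (i:ℕ) := by
      rw [lamOf_eq _ (by omega) (by omega)]
      congr 2
      · ext
        simp [Fin.coe_castSucc]
        omega
      · omega
    have hwge := strictMono_le hw (i:ℕ) (by omega)
    have hieq : (⟨(i:ℕ), by omega⟩ : Fin (m+1)) = i.castSucc := by
      ext; simp
    rw [hieq] at hwge
    show w i.castSucc ≤ xrowOf m w T (m - (i:ℕ)) + (i:ℕ)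
    by_cases hz : w i.castSucc - (i:ℕ) = 0
    · omega
    · have := hcell (w i.castSucc - (i:ℕ)) (by omega) (by rw [hlam1])
      omega
  · -- upper: xrow (m-i) + i ≤ w i.succ - 1
    have hup : xrowOf m w T (m - (i:ℕ)) ≤ lamOf (m+1) w (m - (i:ℕ)) := Pc
    have hlam2 : lamOf (m+1) w (m - (i:ℕ)) = w i.succ - ((i:ℕ)+1) := by
      rw [lamOf_eq _ (by omega) (by omega)]
      congr 2
      · ext
        simp [Fin.val_succ]
        omega
      · omega
    have hwge := strictMono_le hw ((i:ℕ)+1) (by omega)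
    have hieq : (⟨(i:ℕ)+1, by omega⟩ : Fin (m+1)) = i.succ := by
      ext; simp
    rw [hieq] at hwge
    show xrowOf m w T (m - (i:ℕ)) + (i:ℕ) ≤ w i.succ - 1
    omega

lemma TOf_mem (hw : StrictMono w) (hT : T ∈ SS (m+1) w) : TOf m T ∈ SS m (vOf m w T) := by
  have hle := hT.2
  have hPa := Pa hw hT
  have hL := lam'_eq hw hT
  constructor
  · refine ⟨?_, ?_, ?_⟩
    · -- zero outside
      intro a b hnc
      unfold TOf
      by_cases hc : CellOf (lamOf (m+1) w) a b
      · have ha : 1 ≤ a := hc.1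
        have hxb : ¬ b ≤ xrowOf m w T a := by
          intro hb
          exact hnc ⟨hc.1, hc.2.1, by rw [hL a ha]; exact hb⟩
        have : ¬ T a b ≤ m := by
          rw [hPa a b hc]
          exact hxb
        have hub := hle a b
        rw [if_pos (by omega)]
      · rw [hT.1.1 a b hc]
        rw [if_neg (by omega)]
    · -- rows
      intro a b hc
      have ha : 1 ≤ a := hc.1
      have hb1 : 1 ≤ b := hc.2.1
      have hbx : b ≤ xrowOf m w T a := by
        have := hc.2.2; rwa [hL a ha] at this
      have hcell : CellOf (lamOf (m+1) w) a b := ⟨ha, hb1, le_trans hbx Pc⟩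
      have hTb : T a b ≤ m := (hPa a b hcell).mpr hbx
      have hval : TOf m T a b = T a b := by unfold TOf; rw [if_neg (by omega)]
      rcases Nat.eq_or_lt_of_le hb1 with h1 | h1
      · -- b = 1
        rw [← h1]
        rw [show (1:ℕ) - 1 = 0 from rfl, ExtT_col0, ExtT_pos _ ha le_rfl]
        have := row_first hT.1 (by rw [← h1] at hcell; exact hcell)
        rw [← h1] at hval
        omega
      · -- b ≥ 2
        rw [ExtT_pos _ ha (by omega), ExtT_pos _ ha hb1, hval]
        have hbx' : b - 1 ≤ xrowOf m w T a := by omega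
        have hcell' : CellOf (lamOf (m+1) w) a (b-1) := ⟨ha, by omega, by have := hcell.2.2; omega⟩
        have hTb' : T a (b-1) ≤ m := (hPa a (b-1) hcell').mpr hbx'
        have hval' : TOf m T a (b-1) = T a (b-1) := by unfold TOf; rw [if_neg (by omega)]
        rw [hval']
        exact row_le hT.1 hcell (by omega)
    · -- cols
      intro a b hc
      have ha : 1 ≤ a := hc.1
      have hb1 : 1 ≤ b := hc.2.1
      have hbx : b ≤ xrowOf m w T a := by
        have := hc.2.2; rwa [hL a ha] at this
      have hcell : CellOf (lamOf (m+1) w) a b := ⟨ha, hb1, le_trans hbx Pc⟩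
      have hTb : T a b ≤ m := (hPa a b hcell).mpr hbx
      have hval : TOf m T a b = T a b := by unfold TOf; rw [if_neg (by omega)]
      rcases Nat.eq_or_lt_of_le ha with h1 | h1
      · -- a = 1
        rw [← h1]
        rw [show (1:ℕ) - 1 = 0 from rfl, ExtT_row0 _ hb1, ExtT_pos _ le_rfl hb1]
        have := col_first hT.1 (by rw [← h1] at hcell; exact hcell)
        rw [← h1] at hval
        omega
      · -- a ≥ 2
        rw [ExtT_pos _ (by omega) hb1, ExtT_pos _ ha hb1, hval]
        have hanti := lamOf_antitone (m := m+1) (w := w) hw a (by omega)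
        have hcell' : CellOf (lamOf (m+1) w) (a-1) b := ⟨by omega, hb1, by have := hcell.2.2; omega⟩
        have hltT := col_lt hT.1 hcell (by omega)
        have hTb' : T (a-1) b ≤ m := by omega
        have hbx' : b ≤ xrowOf m w T (a-1) := (hPa (a-1) b hcell').mp hTb'
        have hval' : TOf m T (a-1) b = T (a-1) b := by unfold TOf; rw [if_neg (by omega)]
        rw [hval']
        exact hltT
  · -- bound
    intro a b
    unfold TOf
    by_cases h : T a b = m+1
    · rw [if_pos h]; omega
    · rw [if_neg h]
      have := hle a b
      omega

end Peel2

section Peel3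
variable {m : ℕ} {w : Fin (m+1) → ℕ} {v : Fin m → ℕ} {T' : ℕ → ℕ → ℕ}

lemma interlace1 (hv : v ∈ BoxF m w) :
    ∀ a, 2 ≤ a → a ≤ m+1 → lamOf (m+1) w a ≤ lamOf m v (a-1) := by
  intro a h2 hm
  rw [mem_BoxF] at hv
  have hi : m + 1 - a < m := by omega
  rw [lamOf_eq _ (by omega) hm, lamOf_eq _ (by omega) (by omega)]
  have h3 : m - (a-1) = m+1-a := by omega
  have hbox := (hv ⟨m+1-a, hi⟩).1
  have hc : (⟨m+1-a, hi⟩ : Fin m).castSucc = ⟨m+1-a, by omega⟩ := by ext; simp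
  rw [hc] at hbox
  have hq : (⟨m - (a-1), by omega⟩ : Fin m) = ⟨m+1-a, hi⟩ := by ext; simp; omega
  rw [hq]
  omega

lemma interlace2 (hw : StrictMono w) (hv : v ∈ BoxF m w) :
    ∀ a, 1 ≤ a → a ≤ m → lamOf m v a ≤ lamOf (m+1) w a := by
  intro a h1 hm
  rw [mem_BoxF] at hv
  have hi : m - a < m := by omega
  rw [lamOf_eq v h1 hm, lamOf_eq w h1 (by omega)]
  have hbox := (hv ⟨m-a, hi⟩).2
  have hs : (⟨m-a, hi⟩ : Fin m).succ = ⟨m+1-a, by omega⟩ := by ext; simp [Fin.val_succ]; omega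
  rw [hs] at hbox
  have hwge := strictMono_le hw (m+1-a) (by omega)
  have hq : (⟨m - a, by omega⟩ : Fin (m+1)) = ⟨m - a, by omega⟩ := rfl
  omega

lemma PsiT_mem (hw : StrictMono w) (hv : v ∈ BoxF m w) (hT' : T' ∈ SS m v) :
    PsiT m w v T' ∈ SS (m+1) w := by
  have hvsm : StrictMono v := strictMono_of_mem_BoxF hw hv
  have hanti := lamOf_antitone (m := m+1) (w := w) hw
  have hanti' := lamOf_antitone (m := m) (w := v) hvsm
  have hT'le := hT'.2
  have hT'ge := col_ge hT'.1 hanti'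
  -- key: value formula
  have hval : ∀ a b, CellOf (lamOf (m+1) w) a b →
      PsiT m w v T' a b = if b ≤ lamOf m v a then T' a b else m+1 := by
    intro a b hc
    unfold PsiT
    rw [if_pos hc]
  have hcellm : ∀ a b, CellOf (lamOf (m+1) w) a b → a ≤ m+1 := by
    intro a b hc
    by_contra hh
    have h1 := hc.2.2
    have h2 := hc.2.1
    rw [lamOf_eq_zero w (Or.inr (by omega))] at h1
    omega
  have hcell' : ∀ a b, CellOf (lamOf (m+1) w) a b → b ≤ lamOf m v a →
      CellOf (lamOf m v) a b := fun a b hc hb => ⟨hc.1, hc.2.1, hb⟩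
  constructor
  · refine ⟨?_, ?_, ?_⟩
    · intro a b hnc
      unfold PsiT
      rw [if_neg hnc]
    · -- rows
      intro a b hc
      have ha : 1 ≤ a := hc.1
      have hb1 : 1 ≤ b := hc.2.1
      rcases Nat.eq_or_lt_of_le hb1 with h1 | h1
      · -- b = 1
        rw [← h1]
        rw [show (1:ℕ) - 1 = 0 from rfl, ExtT_col0, ExtT_pos _ ha le_rfl]
        rw [← h1] at hc
        rw [hval a 1 hc]
        by_cases hb : 1 ≤ lamOf m v a
        · rw [if_pos hb]
          exact row_first hT'.1 ⟨ha, le_rfl, hb⟩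
        · rw [if_neg hb]
          have := hcellm a 1 hc
          omega
      · -- b ≥ 2
        rw [ExtT_pos _ ha (by omega), ExtT_pos _ ha hb1]
        have hcb : CellOf (lamOf (m+1) w) a (b-1) := ⟨ha, by omega, by have := hc.2.2; omega⟩
        rw [hval a b hc, hval a (b-1) hcb]
        by_cases hb : b ≤ lamOf m v a
        · rw [if_pos hb, if_pos (by omega)]
          have := row_le hT'.1 ⟨ha, hb1, hb⟩ (by omega)
          exact this
        · rw [if_neg hb]
          by_cases hb' : b - 1 ≤ lamOf m v a
          · rw [if_pos hb']
            have := hT'le a (b-1)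
            omega
          · rw [if_neg hb']
    · -- cols
      intro a b hc
      have ha : 1 ≤ a := hc.1
      have hb1 : 1 ≤ b := hc.2.1
      rcases Nat.eq_or_lt_of_le ha with h1 | h1
      · -- a = 1
        rw [← h1]
        rw [show (1:ℕ) - 1 = 0 from rfl, ExtT_row0 _ hb1, ExtT_pos _ le_rfl hb1]
        rw [← h1] at hc
        rw [hval 1 b hc]
        by_cases hb : b ≤ lamOf m v 1
        · rw [if_pos hb]
          exact col_first hT'.1 ⟨le_rfl, hb1, hb⟩
        · rw [if_neg hb]
          omega
      · -- a ≥ 2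
        rw [ExtT_pos _ (by omega) hb1, ExtT_pos _ ha hb1]
        have hlamd := hanti a (by omega)
        have hcb : CellOf (lamOf (m+1) w) (a-1) b := ⟨by omega, hb1, by have := hc.2.2; omega⟩
        rw [hval a b hc, hval (a-1) b hcb]
        by_cases hb : b ≤ lamOf m v a
        · have hd : lamOf m v a ≤ lamOf m v (a-1) := hanti' a (by omega)
          rw [if_pos hb, if_pos (by omega)]
          exact col_lt hT'.1 ⟨ha, hb1, hb⟩ (by omega)
        · rw [if_neg hb]
          have hint : lamOf (m+1) w a ≤ lamOf m v (a-1) :=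
            interlace1 hv a (by omega) (hcellm a b hc)
          rw [if_pos (by have := hc.2.2; omega)]
          have := hT'le (a-1) b
          omega
  · intro a b
    unfold PsiT
    by_cases hcc : CellOf (lamOf (m+1) w) a b
    · rw [if_pos hcc]
      by_cases hb : b ≤ lamOf m v a
      · rw [if_pos hb]
        have := hT'le a b
        omega
      · rw [if_neg hb]
    · rw [if_neg hcc]
      omega

end Peel3

section Peel4
variable {m : ℕ} {w : Fin (m+1) → ℕ} {v : Fin m → ℕ} {T T' : ℕ → ℕ → ℕ}

lemma lam'_le_lam (hw : StrictMono w) (hv : v ∈ BoxF m w) :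
    ∀ a, 1 ≤ a → lamOf m v a ≤ lamOf (m+1) w a := by
  intro a h1
  by_cases hm : a ≤ m
  · exact interlace2 hw hv a h1 hm
  · rw [lamOf_eq_zero v (Or.inr (by omega))]
    omega

lemma xrow_Psi (hw : StrictMono w) (hv : v ∈ BoxF m w) (hT' : T' ∈ SS m v) :
    ∀ a, 1 ≤ a → xrowOf m w (PsiT m w v T') a = lamOf m v a := by
  intro a h1
  have hll := lam'_le_lam hw hv a h1
  unfold xrowOf
  have hfe : (Finset.Icc 1 (lamOf (m+1) w a)).filter (fun b => PsiT m w v T' a b ≤ m)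
      = Finset.Icc 1 (lamOf m v a) := by
    ext b
    rw [Finset.mem_filter, Finset.mem_Icc, Finset.mem_Icc]
    constructor
    · rintro ⟨⟨hb1, hb2⟩, hble⟩
      refine ⟨hb1, ?_⟩
      by_contra hgt
      have hcell : CellOf (lamOf (m+1) w) a b := ⟨h1, hb1, hb2⟩
      unfold PsiT at hble
      rw [if_pos hcell, if_neg (by omega)] at hble
      omega
    · rintro ⟨hb1, hb2⟩
      have hb2' : b ≤ lamOf (m+1) w a := le_trans hb2 hll
      refine ⟨⟨hb1, hb2'⟩, ?_⟩
      have hcell : CellOf (lamOf (m+1) w) a b := ⟨h1, hb1, hb2'⟩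
      unfold PsiT
      rw [if_pos hcell, if_pos hb2]
      exact hT'.2 a b
  rw [hfe, Nat.card_Icc]
  omega

lemma vOf_Psi (hw : StrictMono w) (hv : v ∈ BoxF m w) (hT' : T' ∈ SS m v) :
    vOf m w (PsiT m w v T') = v := by
  have hvsm : StrictMono v := strictMono_of_mem_BoxF hw hv
  funext i
  have him : (i:ℕ) < m := i.2
  unfold vOf
  rw [xrow_Psi hw hv hT' (m - (i:ℕ)) (by omega)]
  rw [lamOf_eq v (by omega) (by omega)]
  have hq : (⟨m - (m - (i:ℕ)), by omega⟩ : Fin m) = i := by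
    ext; simp; omega
  rw [hq]
  have := strictMono_le hvsm (i:ℕ) him
  have hieq : (⟨(i:ℕ), him⟩ : Fin m) = i := by ext; rfl
  rw [hieq] at this
  omega

lemma TOf_Psi (hw : StrictMono w) (hv : v ∈ BoxF m w) (hT' : T' ∈ SS m v) :
    TOf m (PsiT m w v T') = T' := by
  funext a b
  unfold TOf PsiT
  by_cases hc : CellOf (lamOf (m+1) w) a b
  · rw [if_pos hc]
    by_cases hb : b ≤ lamOf m v a
    · rw [if_pos hb]
      have h1 := hT'.2 a b
      rw [if_neg (by omega)]
    · rw [if_neg hb, if_pos rfl]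
      have : ¬ CellOf (lamOf m v) a b := by
        intro hcc
        exact hb hcc.2.2
      rw [hT'.1.1 a b this]
  · rw [if_neg hc, if_neg (by omega)]
    have : ¬ CellOf (lamOf m v) a b := by
      intro hcc
      have h1 := lam'_le_lam hw hv a hcc.1
      exact hc ⟨hcc.1, hcc.2.1, le_trans hcc.2.2 h1⟩
    rw [hT'.1.1 a b this]

lemma Psi_of (hw : StrictMono w) (hT : T ∈ SS (m+1) w) :
    PsiT m w (vOf m w T) (TOf m T) = T := by
  funext a b
  unfold PsiT
  by_cases hc : CellOf (lamOf (m+1) w) a b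
  · rw [if_pos hc]
    have ha : 1 ≤ a := hc.1
    rw [lam'_eq hw hT a ha]
    by_cases hb : b ≤ xrowOf m w T a
    · rw [if_pos hb]
      have h1 : T a b ≤ m := (Pa hw hT a b hc).mpr hb
      unfold TOf
      rw [if_neg (by omega)]
    · rw [if_neg hb]
      have h1 : ¬ T a b ≤ m := by
        rw [Pa hw hT a b hc]
        exact hb
      have h2 := hT.2 a b
      omega
  · rw [if_neg hc, hT.1.1 a b hc]

end Peel4

lemma union_prod_count {α β : Type*} (B : Finset α) (f : α → Set β)
    (hf : ∀ x ∈ B, (f x).Finite) :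
    (⋃ x ∈ B, ({x} ×ˢ f x) : Set (α × β)).Finite ∧
    (⋃ x ∈ B, ({x} ×ˢ f x) : Set (α × β)).ncard = ∑ x ∈ B, (f x).ncard := by
  classical
  induction B using Finset.induction_on with
  | empty => simp
  | @insert a s ha ih =>
    have hfa : (f a).Finite := hf a (Finset.mem_insert_self a s)
    have hfs : ∀ x ∈ s, (f x).Finite := fun x hx => hf x (Finset.mem_insert_of_mem hx)
    obtain ⟨ihFin, ihCard⟩ := ih hfs
    have hU : (⋃ x ∈ insert a s, ({x} ×ˢ f x) : Set (α × β))
        = ({a} ×ˢ f a) ∪ ⋃ x ∈ s, ({x} ×ˢ f x) := by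
      rw [Finset.set_biUnion_insert]
    have hsingfin : ({a} ×ˢ (f a) : Set (α × β)).Finite := by
      rw [Set.singleton_prod]
      exact hfa.image _
    have hinj : Function.Injective (Prod.mk a : β → α × β) := by
      intro x y hxy
      exact (Prod.ext_iff.mp hxy).2
    have hsingcard : ({a} ×ˢ (f a) : Set (α × β)).ncard = (f a).ncard := by
      rw [Set.singleton_prod]
      exact Set.ncard_image_of_injective _ hinj
    have hdisj : Disjoint ({a} ×ˢ (f a) : Set (α × β)) (⋃ x ∈ s, ({x} ×ˢ f x)) := by
      rw [Set.disjoint_left]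
      rintro ⟨p1, p2⟩ hp hq
      rw [Set.mem_prod] at hp
      simp only [Set.mem_iUnion] at hq
      obtain ⟨x, hx, hq⟩ := hq
      rw [Set.mem_prod] at hq
      have h1 : p1 = a := hp.1
      have h2 : p1 = x := hq.1
      rw [h1] at h2
      exact ha (h2 ▸ hx)
    constructor
    · rw [hU]
      exact hsingfin.union ihFin
    · rw [hU, Set.ncard_union_eq hdisj hsingfin ihFin, hsingcard, ihCard,
        Finset.sum_insert ha]

theorem SS_main : ∀ (m : ℕ) (w : Fin m → ℕ), StrictMono w →
    (SS m w).Finite ∧ (SS m w).ncard = Cnt m w := by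
  intro m
  induction m with
  | zero =>
    intro w _
    rw [SS_zero w]
    exact ⟨Set.finite_singleton _, by simp [Cnt]⟩
  | succ m ih =>
    intro w hw
    have hfinV : ∀ v ∈ BoxF m w, (SS m v).Finite :=
      fun v hv => (ih v (strictMono_of_mem_BoxF hw hv)).1
    obtain ⟨hUfin, hUcard⟩ := union_prod_count (BoxF m w) (SS m) hfinV
    set U : Set ((Fin m → ℕ) × (ℕ → ℕ → ℕ)) := ⋃ v ∈ BoxF m w, ({v} ×ˢ SS m v) with hUdef
    set Φ : (ℕ → ℕ → ℕ) → (Fin m → ℕ) × (ℕ → ℕ → ℕ) := fun T => (vOf m w T, TOf m T) with hΦ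
    have hmaps : ∀ T ∈ SS (m+1) w, Φ T ∈ U := by
      intro T hT
      rw [hUdef]
      simp only [Set.mem_iUnion]
      exact ⟨vOf m w T, vOf_mem_box hw hT, rfl, TOf_mem hw hT⟩
    have hinj : Set.InjOn Φ (SS (m+1) w) := by
      intro T1 h1 T2 h2 heq
      have e1 : vOf m w T1 = vOf m w T2 := congrArg Prod.fst heq
      have e2 : TOf m T1 = TOf m T2 := congrArg Prod.snd heq
      calc T1 = PsiT m w (vOf m w T1) (TOf m T1) := (Psi_of hw h1).symm
        _ = PsiT m w (vOf m w T2) (TOf m T2) := by rw [e1, e2]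
        _ = T2 := Psi_of hw h2
    have hsurj : ∀ p ∈ U, ∃ T ∈ SS (m+1) w, Φ T = p := by
      rintro ⟨v, T'⟩ hp
      rw [hUdef] at hp
      simp only [Set.mem_iUnion] at hp
      obtain ⟨v', hv', hmem⟩ := hp
      rw [Set.mem_prod] at hmem
      have hv1 : v = v' := hmem.1
      subst hv1
      have hT' : T' ∈ SS m v := hmem.2
      refine ⟨PsiT m w v T', PsiT_mem hw hv' hT', ?_⟩
      rw [hΦ]
      simp only []
      rw [vOf_Psi hw hv' hT', TOf_Psi hw hv' hT']
    have himg : Φ '' (SS (m+1) w) = U := by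
      apply Set.eq_of_subset_of_subset
      · rintro p ⟨T, hT, rfl⟩
        exact hmaps T hT
      · intro p hp
        obtain ⟨T, hT, hTp⟩ := hsurj p hp
        exact ⟨T, hT, hTp⟩
    have hfin : (SS (m+1) w).Finite := by
      apply Set.Finite.of_finite_image _ hinj
      rw [himg]
      exact hUfin
    refine ⟨hfin, ?_⟩
    have h1 : (SS (m+1) w).ncard = U.ncard := by
      rw [← himg, Set.ncard_image_of_injOn hinj]
    rw [h1, hUcard]
    show _ = Cnt (m+1) w
    unfold Cnt
    apply Finset.sum_congr rfl
    intro v hv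
    exact (ih v (strictMono_of_mem_BoxF hw hv)).2


lemma IsSSYTShape_congr {lam1 lam2 : ℕ → ℕ} (h : ∀ a, 1 ≤ a → lam1 a = lam2 a) (T : ℕ→ℕ→ℕ) :
    IsSSYTShape lam1 T ↔ IsSSYTShape lam2 T := by
  have hc : ∀ a b, CellOf lam1 a b ↔ CellOf lam2 a b := by
    intro a b
    unfold CellOf
    constructor
    · rintro ⟨h1, h2, h3⟩; exact ⟨h1, h2, by rw [← h a h1]; exact h3⟩
    · rintro ⟨h1, h2, h3⟩; exact ⟨h1, h2, by rw [h a h1]; exact h3⟩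
  unfold IsSSYTShape
  constructor
  · rintro ⟨z, r, c⟩
    exact ⟨fun a b hn => z a b (fun hcell => hn ((hc a b).mp hcell)),
      fun a b hcell => r a b ((hc a b).mpr hcell),
      fun a b hcell => c a b ((hc a b).mpr hcell)⟩
  · rintro ⟨z, r, c⟩
    exact ⟨fun a b hn => z a b (fun hcell => hn ((hc a b).mpr hcell)),
      fun a b hcell => r a b ((hc a b).mp hcell),
      fun a b hcell => c a b ((hc a b).mp hcell)⟩


/-- For `n ≥ 2`, the number of SSYT of shape `δ_{n-1} = (n-2,…,1)` with all
entries at most `n-1` equals `2^(C(n-1,2))`. -/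
theorem stmt10 (n : ℕ) (hn : 2 ≤ n) :
    {T : ℕ → ℕ → ℕ | MnMem n T}.ncard = 2 ^ Nat.choose (n - 1) 2 := by
  obtain ⟨k, rfl⟩ : ∃ k, n = k + 2 := ⟨n - 2, by omega⟩
  set w₀ : Fin (k+1) → ℕ := fun i => 2*(i:ℕ) with hw₀
  have hsm : StrictMono w₀ := by
    intro i j hij
    have : (i:ℕ) < (j:ℕ) := hij
    simp only [hw₀]
    omega
  have hlam : ∀ a, 1 ≤ a → staircase (k+2) a = lamOf (k+1) w₀ a := by
    intro a ha
    by_cases h2 : a ≤ k+1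
    · rw [lamOf_eq w₀ ha h2]
      show k + 2 - 1 - a = 2 * ((k+1) - a) - ((k+1) - a)
      omega
    · rw [lamOf_eq_zero w₀ (Or.inr (by omega))]
      show k + 2 - 1 - a = 0
      omega
  have hset : {T : ℕ → ℕ → ℕ | MnMem (k+2) T} = SS (k+1) w₀ := by
    ext T
    show MnMem (k+2) T ↔ T ∈ SS (k+1) w₀
    unfold MnMem SS
    rw [IsSSYTShape_congr hlam T]
    show _ ↔ IsSSYTShape (lamOf (k + 1) w₀) T ∧ ∀ (a b : ℕ), T a b ≤ k + 1
    constructor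
    · rintro ⟨h1, h2⟩
      exact ⟨h1, fun a b => by have := h2 a b; omega⟩
    · rintro ⟨h1, h2⟩
      exact ⟨h1, fun a b => by have := h2 a b; omega⟩
  rw [hset, (SS_main (k+1) w₀ hsm).2]
  have := Cnt_double k
  rw [this]
  congr 1
end
end

section
/- Let T be an SSYT of shape λ with minimal SSYT T⁰ (having (a,b)-entry a). Then T has exactly one reducible entry, located at (a₀,b₀), if and only if T = Add(T⁰; a₀, b₀, k) for some k ≥ 1. -/
lemma cellMono {lam : ℕ → ℕ} (hlam : ∀ a, lam (a + 1) ≤ lam a)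
    {a b a' b' : ℕ} (hc : CellOf lam a b) (ha1 : 1 ≤ a') (ha : a' ≤ a)
    (hb1 : 1 ≤ b') (hb : b' ≤ b) : CellOf lam a' b' :=
  ⟨ha1, hb1, hb.trans (hc.2.2.trans (antitone_nat_of_succ_le hlam ha))⟩

lemma extT_cell_s14 {T : ℕ → ℕ → ℕ} {a b : ℕ} (ha : 1 ≤ a) (hb : 1 ≤ b) :
    ExtT T a b = T a b := by
  unfold ExtT
  rw [if_neg (by omega), if_neg (by omega)]

lemma extT_zero_row {T : ℕ → ℕ → ℕ} {b : ℕ} (hb : 1 ≤ b) : ExtT T 0 b = 0 := by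
  unfold ExtT
  rw [if_neg (by omega), if_pos rfl]

lemma extT_zero_col (T : ℕ → ℕ → ℕ) (a : ℕ) : ExtT T a 0 = a := by
  unfold ExtT
  rw [if_pos rfl]

lemma entry_ge_s14 {lam : ℕ → ℕ} {T : ℕ → ℕ → ℕ} (hlam : ∀ a, lam (a + 1) ≤ lam a)
    (hT : IsSSYTShape lam T) : ∀ a b, CellOf lam a b → a ≤ T a b := by
  intro a
  induction a with
  | zero => intro b hcell; exact absurd hcell.1 (by omega)
  | succ n ih =>
    intro b hcell
    have h := hT.2.2 (n+1) b hcell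
    rw [extT_cell_s14 hcell.1 hcell.2.1] at h
    rcases Nat.eq_zero_or_pos n with h0 | h0
    · subst h0
      rw [show (0+1) - 1 = 0 from rfl, extT_zero_row hcell.2.1] at h
      omega
    · have hc' : CellOf lam n b := cellMono hlam hcell h0 (by omega) hcell.2.1 le_rfl
      rw [show (n+1) - 1 = n from rfl, extT_cell_s14 h0 hcell.2.1] at h
      have := ih b hc'
      omega

lemma mkRed {T : ℕ → ℕ → ℕ} {a b : ℕ} (ha : 1 ≤ a) (hb : 1 ≤ b)
    (h1 : ExtT T a (b-1) + 1 ≤ T a b) (h2 : ExtT T (a-1) b + 2 ≤ T a b) :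
    Reducible T a b := by
  constructor <;> rw [extT_cell_s14 ha hb] <;> assumption

lemma addT_val {lam : ℕ → ℕ} {a₀ b₀ k a b : ℕ} (hcell : CellOf lam a b) :
    AddT lam (minT lam) a₀ b₀ k a b = if a₀ ≤ a ∧ b₀ ≤ b then a + k else a := by
  unfold AddT minT
  by_cases h : a₀ ≤ a ∧ b₀ ≤ b <;> simp [hcell, h]

/-- Let `T` be an SSYT of (weakly decreasing) shape `lam` and `(a₀,b₀)` a cell
of `lam`. Then `T` has exactly one reducible entry, located at `(a₀,b₀)`, iff
`T = Add(T⁰; a₀, b₀, k)` for some `k ≥ 1`, where `T⁰` is the minimal SSYT of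
shape `lam` (with `(a,b)`-entry `a`). -/
theorem stmt14 (lam : ℕ → ℕ) (hlam : ∀ a, lam (a + 1) ≤ lam a)
    (T : ℕ → ℕ → ℕ) (hT : IsSSYTShape lam T) (a₀ b₀ : ℕ) (hc : CellOf lam a₀ b₀) :
    (Reducible T a₀ b₀ ∧
      ∀ a b, CellOf lam a b → Reducible T a b → a = a₀ ∧ b = b₀) ↔
    ∃ k : ℕ, 1 ≤ k ∧ T = AddT lam (minT lam) a₀ b₀ k := by
  constructor
  · rintro ⟨hred, huniq⟩
    have hge := entry_ge_s14 hlam hT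
    -- Claim A: outside the quadrant, T a b = a
    have claimA : ∀ n, ∀ a b, a + b ≤ n → CellOf lam a b →
        ¬(a₀ ≤ a ∧ b₀ ≤ b) → T a b = a := by
      intro n
      induction n with
      | zero => intro a b hn hcell _; exact absurd hcell.1 (by omega)
      | succ n ih =>
        intro a b hn hcell hq
        by_contra hne
        have hgt : a + 1 ≤ T a b := by have := hge a b hcell; omega
        have hleft : ExtT T a (b-1) = a := by
          rcases Nat.lt_or_ge b 2 with hb | hb
          · rw [show b - 1 = 0 by omega, extT_zero_col]
          · have hc' : CellOf lam a (b-1) :=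
              cellMono hlam hcell hcell.1 le_rfl (by omega) (by omega)
            rw [extT_cell_s14 hcell.1 (by omega)]
            exact ih a (b-1) (by omega) hc' (by omega)
        have hup : ExtT T (a-1) b = a - 1 := by
          rcases Nat.lt_or_ge a 2 with ha | ha
          · rw [show a - 1 = 0 by omega, extT_zero_row hcell.2.1]
          · have hc' : CellOf lam (a-1) b :=
              cellMono hlam hcell (by omega) (by omega) hcell.2.1 le_rfl
            rw [extT_cell_s14 (by omega) hcell.2.1]
            exact ih (a-1) b (by omega) hc' (by omega)
        have ha1 := hcell.1
        have hb1 := hcell.2.1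
        have hR : Reducible T a b :=
          mkRed hcell.1 hcell.2.1 (by omega) (by omega)
        have := huniq a b hcell hR
        omega
    -- k ≥ 1
    have hk1 : a₀ + 1 ≤ T a₀ b₀ := by
      have h1 := hred.1
      rw [extT_cell_s14 hc.1 hc.2.1] at h1
      rcases Nat.lt_or_ge b₀ 2 with hb | hb
      · rw [show b₀ - 1 = 0 by omega, extT_zero_col] at h1; omega
      · have hc' : CellOf lam a₀ (b₀-1) :=
          cellMono hlam hc hc.1 le_rfl (by omega) (by omega)
        rw [extT_cell_s14 hc.1 (by omega)] at h1
        have := hge a₀ (b₀-1) hc'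
        omega
    set k := T a₀ b₀ - a₀ with hkdef
    have hk0 : T a₀ b₀ = a₀ + k := by omega
    -- Claim B1: along row a₀
    have claimB1 : ∀ b, b₀ ≤ b → CellOf lam a₀ b → a₀ + k ≤ T a₀ b := by
      intro b
      induction b with
      | zero => intro hb hcell; exact absurd hc.2.1 (by omega)
      | succ n ih =>
        intro hb hcell
        rcases Nat.lt_or_ge n b₀ with h | h
        · have : b₀ = n + 1 := by omega
          rw [← this]; omega
        · have hrow := hT.2.1 a₀ (n+1) hcell
          rw [show (n+1) - 1 = n from rfl,
            extT_cell_s14 hcell.1 (show 1 ≤ n by have := hc.2.1; omega),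
            extT_cell_s14 hcell.1 hcell.2.1] at hrow
          have hc' : CellOf lam a₀ n :=
            cellMono hlam hcell hcell.1 le_rfl (by have := hc.2.1; omega) (by omega)
          have := ih h hc'
          omega
    -- Claim B2: quadrant lower bound
    have claimB2 : ∀ a, a₀ ≤ a → ∀ b, b₀ ≤ b → CellOf lam a b → a + k ≤ T a b := by
      intro a
      induction a with
      | zero => intro ha; exact absurd hc.1 (by omega)
      | succ n ih =>
        intro ha b hb hcell
        rcases Nat.lt_or_ge n a₀ with h | h
        · have : a₀ = n + 1 := by omega
          subst this
          exact claimB1 b hb hcell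
        · have hcol := hT.2.2 (n+1) b hcell
          rw [show (n+1) - 1 = n from rfl, extT_cell_s14 hcell.1 hcell.2.1,
            extT_cell_s14 (by have := hc.1; omega) hcell.2.1] at hcol
          have hc' : CellOf lam n b :=
            cellMono hlam hcell (by have := hc.1; omega) (by omega) hcell.2.1 le_rfl
          have := ih h b hb hc'
          omega
    -- Claim C: quadrant upper bound
    have claimC : ∀ n, ∀ a b, a + b ≤ n → CellOf lam a b → a₀ ≤ a → b₀ ≤ b →
        T a b ≤ a + k := by
      intro n
      induction n with
      | zero => intro a b hn hcell _ _; exact absurd hcell.1 (by omega)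
      | succ n ih =>
        intro a b hn hcell ha hb
        by_contra hcon
        have hgt : a + k + 1 ≤ T a b := by omega
        have hleft : ExtT T a (b-1) ≤ a + k := by
          rcases Nat.lt_or_ge b 2 with h2 | h2
          · rw [show b - 1 = 0 by omega, extT_zero_col]; omega
          · have hc' : CellOf lam a (b-1) :=
              cellMono hlam hcell hcell.1 le_rfl (by omega) (by omega)
            rw [extT_cell_s14 hcell.1 (by omega)]
            rcases Nat.lt_or_ge (b-1) b₀ with h3 | h3
            · have := claimA (a + (b-1)) a (b-1) le_rfl hc' (by omega)
              omega
            · exact ih a (b-1) (by omega) hc' ha h3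
        have hup : ExtT T (a-1) b ≤ a - 1 + k := by
          rcases Nat.lt_or_ge a 2 with h2 | h2
          · rw [show a - 1 = 0 by omega, extT_zero_row hcell.2.1]; omega
          · have hc' : CellOf lam (a-1) b :=
              cellMono hlam hcell (by omega) (by omega) hcell.2.1 le_rfl
            rw [extT_cell_s14 (by omega) hcell.2.1]
            rcases Nat.lt_or_ge (a-1) a₀ with h3 | h3
            · have := claimA ((a-1) + b) (a-1) b le_rfl hc' (by omega)
              omega
            · exact ih (a-1) b (by omega) hc' h3 hb
        have ha1 := hcell.1
        have hb1 := hcell.2.1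
        have hR : Reducible T a b :=
          mkRed hcell.1 hcell.2.1 (by omega) (by omega)
        have heq := huniq a b hcell hR
        have h6 : T a b = T a₀ b₀ := by rw [heq.1, heq.2]
        omega
    refine ⟨k, by omega, ?_⟩
    funext a b
    by_cases hcell : CellOf lam a b
    · rw [addT_val hcell]
      by_cases hq : a₀ ≤ a ∧ b₀ ≤ b
      · rw [if_pos hq]
        have h1 := claimB2 a hq.1 b hq.2 hcell
        have h2 := claimC (a+b) a b le_rfl hcell hq.1 hq.2
        omega
      · rw [if_neg hq]
        exact claimA (a+b) a b le_rfl hcell hq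
    · rw [hT.1 a b hcell]
      unfold AddT minT
      simp [hcell]
  · rintro ⟨k, hk, rfl⟩
    constructor
    · constructor
      · rw [extT_cell_s14 hc.1 hc.2.1, addT_val hc, if_pos ⟨le_rfl, le_rfl⟩]
        rcases Nat.lt_or_ge b₀ 2 with hb | hb
        · rw [show b₀ - 1 = 0 by omega, extT_zero_col]; omega
        · have hc' : CellOf lam a₀ (b₀-1) :=
            cellMono hlam hc hc.1 le_rfl (by omega) (by omega)
          rw [extT_cell_s14 hc.1 (by omega), addT_val hc', if_neg (by omega)]
          omega
      · rw [extT_cell_s14 hc.1 hc.2.1, addT_val hc, if_pos ⟨le_rfl, le_rfl⟩]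
        rcases Nat.lt_or_ge a₀ 2 with ha | ha
        · rw [show a₀ - 1 = 0 by omega, extT_zero_row hc.2.1]; have := hc.1; omega
        · have hc' : CellOf lam (a₀-1) b₀ :=
            cellMono hlam hc (by omega) (by omega) hc.2.1 le_rfl
          rw [extT_cell_s14 (by omega) hc.2.1, addT_val hc', if_neg (by omega)]
          omega
    · intro a b hcell hred
      obtain ⟨h1, h2⟩ := hred
      rw [extT_cell_s14 hcell.1 hcell.2.1, addT_val hcell] at h1 h2
      have e1 : ExtT (AddT lam (minT lam) a₀ b₀ k) a (b-1) = if a₀ ≤ a ∧ b₀ ≤ b - 1 ∧ 2 ≤ b then a + k else a := by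
        rcases Nat.lt_or_ge b 2 with h | h
        · rw [show b - 1 = 0 by omega, extT_zero_col, if_neg (by omega)]
        · have hc' : CellOf lam a (b-1) :=
            cellMono hlam hcell hcell.1 le_rfl (by omega) (by omega)
          rw [extT_cell_s14 hcell.1 (by omega), addT_val hc']
          by_cases hq : a₀ ≤ a ∧ b₀ ≤ b - 1
          · rw [if_pos hq, if_pos ⟨hq.1, hq.2, h⟩]
          · rw [if_neg hq, if_neg (by tauto)]
      have e2 : ExtT (AddT lam (minT lam) a₀ b₀ k) (a-1) b = if a₀ ≤ a - 1 ∧ b₀ ≤ b ∧ 2 ≤ a then a - 1 + k else a - 1 := by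
        rcases Nat.lt_or_ge a 2 with h | h
        · rw [show a - 1 = 0 by omega, extT_zero_row hcell.2.1, if_neg (by omega)]
        · have hc' : CellOf lam (a-1) b :=
            cellMono hlam hcell (by omega) (by omega) hcell.2.1 le_rfl
          rw [extT_cell_s14 (by omega) hcell.2.1, addT_val hc']
          by_cases hq : a₀ ≤ a - 1 ∧ b₀ ≤ b
          · rw [if_pos hq, if_pos ⟨hq.1, hq.2, h⟩]
          · rw [if_neg hq, if_neg (by tauto)]
      rw [e1] at h1
      rw [e2] at h2
      have hb0 := hc.2.1
      have ha0 := hc.1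
      have hb1 := hcell.2.1
      have ha1 := hcell.1
      split_ifs at h1 h2 <;> omega
end

section
/- The maximum size of an antichain of the poset P_n = {(i,j,k) ∈ [n]³ : i+j < n+1 < j+k} (componentwise order) is m(m-1) if n = 2m and m² if n = 2m+1. -/
lemma triple_le_iff (p q : ℕ × ℕ × ℕ) :
    p ≤ q ↔ p.1 ≤ q.1 ∧ p.2.1 ≤ q.2.1 ∧ p.2.2 ≤ q.2.2 := by
  simp [Prod.le_def]

/-- auxiliary sum -/
def gsum (N : ℕ) : ℕ := ∑ t ∈ Finset.range N, min (N - t) (t + 1)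

lemma gsum_step (N : ℕ) : gsum (N + 2) = gsum N + (N + 2) := by
  rw [gsum, Finset.sum_range_succ', Finset.sum_range_succ]
  have h1 : ∀ t ∈ Finset.range N,
      min (N + 2 - (t + 1)) (t + 1 + 1) = min (N - t) (t + 1) + 1 := by
    intro t ht
    have := Finset.mem_range.mp ht
    omega
  rw [Finset.sum_congr rfl h1, Finset.sum_add_distrib, Finset.sum_const, Finset.card_range,
    smul_eq_mul, gsum]
  omega

lemma gsum_val (N : ℕ) : gsum N = (N + 2) / 2 * ((N + 1) / 2) := by
  induction N using Nat.strong_induction_on with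
  | _ N ih =>
    match N with
    | 0 => simp [gsum]
    | 1 => simp [gsum]
    | (K+2) =>
      rw [gsum_step, ih K (by omega)]
      obtain ⟨a, rfl | rfl⟩ := Nat.even_or_odd' K
      · have h1 : (2 * a + 2) / 2 = a + 1 := by omega
        have h2 : (2 * a + 1) / 2 = a := by omega
        have h3 : (2 * a + 2 + 2) / 2 = a + 2 := by omega
        have h4 : (2 * a + 2 + 1) / 2 = a + 1 := by omega
        rw [h1, h2, h3, h4]; ring
      · have h1 : (2 * a + 1 + 2) / 2 = a + 1 := by omega
        have h2 : (2 * a + 1 + 1) / 2 = a + 1 := by omega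
        have h3 : (2 * a + 1 + 2 + 2) / 2 = a + 2 := by omega
        have h4 : (2 * a + 1 + 2 + 1) / 2 = a + 2 := by omega
        rw [h1, h2, h3, h4]; ring

lemma sum_min_val (n : ℕ) (hn : 2 ≤ n) :
    ∑ j ∈ Finset.Icc 2 (n - 1), min (n - j) (j - 1) = n / 2 * ((n - 1) / 2) := by
  have hIcc : Finset.Icc 2 (n - 1) = Finset.Ico 2 n := by
    rw [← Finset.Ico_add_one_right_eq_Icc]
    congr 1
    omega
  rw [hIcc, Finset.sum_Ico_eq_sum_range]
  have h1 : ∀ t ∈ Finset.range (n - 2), min (n - (2 + t)) (2 + t - 1) = min (n - 2 - t) (t + 1) := by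
    intro t ht
    have := Finset.mem_range.mp ht
    omega
  rw [Finset.sum_congr rfl h1]
  have := gsum_val (n - 2)
  rw [gsum] at this
  rw [this]
  congr 2 <;> omega

/-- index set for the extremal antichain -/
def lbIdx (n : ℕ) : Finset ((_ : ℕ) × ℕ) :=
  (Finset.Icc 2 (n - 1)).sigma (fun j => Finset.Icc (max 1 (n + 2 - 2 * j)) (n - j))

/-- the extremal antichain: slice of weight i + 2j + k = 2n + 2 -/
def lbA (n : ℕ) : Finset (ℕ × ℕ × ℕ) :=
  (lbIdx n).image (fun q => (q.2, q.1, 2 * n + 2 - 2 * q.1 - q.2))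

lemma mem_lbIdx (n : ℕ) (q : (_ : ℕ) × ℕ) :
    q ∈ lbIdx n ↔ (2 ≤ q.1 ∧ q.1 ≤ n - 1) ∧ (max 1 (n + 2 - 2 * q.1) ≤ q.2 ∧ q.2 ≤ n - q.1) := by
  simp [lbIdx, Finset.mem_sigma, Finset.mem_Icc]

lemma lbA_card (n : ℕ) (hn : 2 ≤ n) : (lbA n).card = n / 2 * ((n - 1) / 2) := by
  rw [lbA, Finset.card_image_of_injective _ (by
    intro q q' h
    simp only [Prod.mk.injEq] at h
    exact Sigma.ext h.2.1 (heq_of_eq h.1))]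
  rw [lbIdx, Finset.card_sigma]
  rw [← sum_min_val n hn]
  apply Finset.sum_congr rfl
  intro j hj
  rw [Finset.mem_Icc] at hj
  rw [Nat.card_Icc]
  omega

lemma lbA_subset (n : ℕ) (hn : 2 ≤ n) : ↑(lbA n) ⊆ PnSet n := by
  intro p hp
  simp only [Finset.coe_image, Set.mem_image, Finset.mem_coe, lbA] at hp
  obtain ⟨q, hq, rfl⟩ := hp
  rw [mem_lbIdx] at hq
  simp only [PnSet, Set.mem_setOf_eq]
  omega

lemma lbA_antichain (n : ℕ) (hn : 2 ≤ n) : IsAntichain (· ≤ ·) (↑(lbA n) : Set (ℕ × ℕ × ℕ)) := by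
  intro p hp q hq hne hle
  simp only [Finset.coe_image, Set.mem_image, Finset.mem_coe, lbA] at hp hq
  obtain ⟨a, ha, rfl⟩ := hp
  obtain ⟨b, hb, rfl⟩ := hq
  rw [mem_lbIdx] at ha hb
  rw [triple_le_iff] at hle
  simp only at hle ha hb
  apply hne
  simp only [Prod.mk.injEq]
  omega

lemma upper_bound (n : ℕ) (hn : 2 ≤ n) (A : Set (ℕ × ℕ × ℕ))
    (hsub : A ⊆ PnSet n) (hanti : IsAntichain (· ≤ ·) A) :
    A.ncard ≤ n / 2 * ((n - 1) / 2) := by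
  have hfin : A.Finite := by
    apply Set.Finite.subset
      (Finset.finite_toSet (Finset.Icc 1 n ×ˢ Finset.Icc 1 n ×ˢ Finset.Icc 1 n))
    intro p hp
    have h := hsub hp
    simp only [PnSet, Set.mem_setOf_eq] at h
    simp only [Finset.coe_product, Set.mem_prod, Finset.mem_coe, Finset.mem_Icc]
    omega
  rw [Set.ncard_eq_toFinset_card A hfin]
  set B := hfin.toFinset with hB
  have hmemB : ∀ p, p ∈ B ↔ p ∈ A := fun p => Set.Finite.mem_toFinset hfin
  have hmem : ∀ p ∈ B, p.2.1 ∈ Finset.Icc 2 (n - 1) := by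
    intro p hp
    have h := hsub ((hmemB p).mp hp)
    simp only [PnSet, Set.mem_setOf_eq] at h
    rw [Finset.mem_Icc]
    omega
  rw [Finset.card_eq_sum_card_fiberwise hmem]
  rw [← sum_min_val n hn]
  apply Finset.sum_le_sum
  intro j hj
  rw [Finset.mem_Icc] at hj
  set C := B.filter (fun p => p.2.1 = j) with hC
  have hCA : ∀ p ∈ C, p ∈ A ∧ p.2.1 = j := by
    intro p hp
    rw [hC, Finset.mem_filter] at hp
    exact ⟨(hmemB p).mp hp.1, hp.2⟩
  have hfst : ∀ p ∈ C, ∀ q ∈ C, p.1 = q.1 → p = q := by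
    intro p hp q hq hpq
    by_contra hne
    obtain ⟨hpA, hpj⟩ := hCA p hp
    obtain ⟨hqA, hqj⟩ := hCA q hq
    have h1 := hanti hpA hqA hne
    have h2 := hanti hqA hpA (Ne.symm hne)
    rcases le_total p.2.2 q.2.2 with h | h
    · exact h1 ((triple_le_iff p q).mpr ⟨hpq.le, by omega, h⟩)
    · exact h2 ((triple_le_iff q p).mpr ⟨hpq.ge, by omega, h⟩)
  have hsnd : ∀ p ∈ C, ∀ q ∈ C, p.2.2 = q.2.2 → p = q := by
    intro p hp q hq hpq
    by_contra hne
    obtain ⟨hpA, hpj⟩ := hCA p hp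
    obtain ⟨hqA, hqj⟩ := hCA q hq
    have h1 := hanti hpA hqA hne
    have h2 := hanti hqA hpA (Ne.symm hne)
    rcases le_total p.1 q.1 with h | h
    · exact h1 ((triple_le_iff p q).mpr ⟨h, by omega, hpq.le⟩)
    · exact h2 ((triple_le_iff q p).mpr ⟨h, by omega, hpq.ge⟩)
  have h1 : C.card ≤ n - j := by
    have := Finset.card_le_card_of_injOn (fun p => p.1)
      (by have hm := (fun p hp => by
        have h := hsub ((hCA p hp).1)
        have hj' := (hCA p hp).2
        simp only [PnSet, Set.mem_setOf_eq] at h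
        rw [Finset.mem_Icc]
        omega : ∀ p ∈ C, p.1 ∈ Finset.Icc 1 (n - j)); exact fun p hp => hm p hp)
      (fun p hp q hq h => hfst p hp q hq h)
    rwa [Nat.card_Icc, Nat.add_sub_cancel] at this
  have h2 : C.card ≤ j - 1 := by
    have := Finset.card_le_card_of_injOn (fun p => p.2.2)
      (by have hm := (fun p hp => by
        have h := hsub ((hCA p hp).1)
        have hj' := (hCA p hp).2
        simp only [PnSet, Set.mem_setOf_eq] at h
        rw [Finset.mem_Icc]
        omega : ∀ p ∈ C, p.2.2 ∈ Finset.Icc (n + 2 - j) n); exact fun p hp => hm p hp)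
      (fun p hp q hq h => hsnd p hp q hq h)
    rw [Nat.card_Icc] at this
    omega
  exact le_min h1 h2

/-- The maximum size of an antichain of `P_n` (componentwise order) is
`m(m-1)` if `n = 2m` and `m²` if `n = 2m+1`. -/
theorem stmt17 (n m : ℕ) (hn : 2 ≤ n) :
    (n = 2 * m → IsGreatest
      {s | ∃ A : Set (ℕ × ℕ × ℕ),
        A ⊆ PnSet n ∧ IsAntichain (· ≤ ·) A ∧ A.ncard = s} (m * (m - 1))) ∧
    (n = 2 * m + 1 → IsGreatest
      {s | ∃ A : Set (ℕ × ℕ × ℕ),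
        A ⊆ PnSet n ∧ IsAntichain (· ≤ ·) A ∧ A.ncard = s} (m ^ 2)) := by
  have key : IsGreatest
      {s | ∃ A : Set (ℕ × ℕ × ℕ),
        A ⊆ PnSet n ∧ IsAntichain (· ≤ ·) A ∧ A.ncard = s} (n / 2 * ((n - 1) / 2)) := by
    constructor
    · exact ⟨↑(lbA n), lbA_subset n hn, lbA_antichain n hn,
        by rw [Set.ncard_coe_finset, lbA_card n hn]⟩
    · rintro s ⟨A, h1, h2, rfl⟩
      exact upper_bound n hn A h1 h2
  constructor
  · rintro rfl
    have h1 : 2 * m / 2 = m := by omega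
    have h2 : (2 * m - 1) / 2 = m - 1 := by omega
    rw [h1, h2] at key
    exact key
  · rintro rfl
    have h1 : (2 * m + 1) / 2 = m := by omega
    have h2 : (2 * m + 1 - 1) / 2 = m := by omega
    rw [h1, h2] at key
    rw [pow_two]
    exact key
end
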